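/- arXiv:1311.6288 — 6 statements merged into one kernel-verified Lean document; each statement's English description precedes it below -/
import Mathlib

section
/- There exists a constant C₀ > 1 with the following property. For every commutative unital normed ℝ-algebra A with submultiplicative norm, every ℝ-linear derivation D : A → A, every integer N ≥ 3, every real L ≥ 1, and all elements u₁, u₂, u₃, u₄, u₅ ∈ A satisfying ‖Dⁿ uᵢ‖ ≤ L^{n−3/2}·(n−2)! for all integers 2 ≤ n ≤ N and all i ∈ {1,…,5}, one has ‖Dⁿ(u₁u₂u₃u₄u₅)‖ ≤ C₀·(1 + Σ_{i=1}^{5} Σ_{l=0}^{1} ‖D^l uᵢ‖)^{16}·L^{n−3/2}·(n−2)! for all integers 2 ≤ n ≤ N. -/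
open Finset Nat

noncomputable def hfun (k : ℕ) : ℝ :=
  if k = 0 then 1 else if k = 1 then 3 else 8 / ((k : ℝ) * ((k : ℝ) - 1))

lemma hfun_nonneg (k : ℕ) : 0 ≤ hfun k := by
  unfold hfun
  split_ifs with h0 h1
  · norm_num
  · norm_num
  · have h2 : (2 : ℝ) ≤ (k : ℝ) := by exact_mod_cast (by omega : 2 ≤ k)
    exact le_of_lt (div_pos (by norm_num) (by nlinarith))

lemma hfun_sum_le (m : ℕ) : ∑ k ∈ range m, hfun k ≤ 12 := by
  rcases Nat.lt_or_ge m 3 with hm | hm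
  · interval_cases m <;> simp [Finset.sum_range_succ, hfun] <;> norm_num
  · -- prove ∀ m ≥ 3, ∑_{range m} hfun = 12 - 8/(m-1)
    have key : ∀ m : ℕ, 3 ≤ m → ∑ k ∈ range m, hfun k = 12 - 8 / ((m : ℝ) - 1) := by
      intro m hm
      induction m with
      | zero => omega
      | succ p ih =>
        rcases Nat.lt_or_ge p 3 with hp | hp
        · have : p = 2 := by omega
          subst this
          rw [Finset.sum_range_succ, Finset.sum_range_succ, Finset.sum_range_succ,
            Finset.sum_range_zero]
          simp [hfun]
          norm_num
        · rw [Finset.sum_range_succ, ih hp]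
          have hp1 : (2 : ℝ) ≤ (p : ℝ) := by exact_mod_cast (by omega : 2 ≤ p)
          have h1 : ((p : ℝ) - 1) ≠ 0 := by nlinarith
          have h2 : (p : ℝ) ≠ 0 := by nlinarith
          have : hfun p = 8 / ((p : ℝ) * ((p : ℝ) - 1)) := by
            unfold hfun; rw [if_neg (by omega), if_neg (by omega)]
          rw [this]
          push_cast
          field_simp
          ring_nf
          field_simp
          ring
    rw [key m hm]
    have : (2 : ℝ) ≤ (m : ℝ) := by exact_mod_cast (by omega : 2 ≤ m)
    have : 0 ≤ 8 / ((m : ℝ) - 1) := le_of_lt (div_pos (by norm_num) (by nlinarith))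
    linarith

noncomputable def mfun (L : ℝ) (k : ℕ) : ℝ :=
  if k < 2 then 1 else L ^ ((k : ℝ) - 3 / 2) * (k - 2).factorial

lemma mfun_nonneg (L : ℝ) (hL : 1 ≤ L) (k : ℕ) : 0 ≤ mfun L k := by
  unfold mfun
  split_ifs
  · norm_num
  · have hL0 : (0 : ℝ) < L := by linarith
    positivity

lemma one_le_rpow_aux (L : ℝ) (hL : 1 ≤ L) (e : ℝ) (he : 0 ≤ e) : 1 ≤ L ^ e := by
  calc (1 : ℝ) = L ^ (0 : ℝ) := (Real.rpow_zero L).symm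
  _ ≤ L ^ e := Real.rpow_le_rpow_of_exponent_le hL he

lemma nat_middle (a b : ℕ) :
    (a + b + 4).factorial ≤
      (8 * ((b + 2) * (b + 1)) + (a + 2) * (a + 1) * 8) * (a + b + 2).factorial := by
  have e : (a + b + 4).factorial = ((a + b + 4) * (a + b + 3)) * (a + b + 2).factorial := by
    rw [show a + b + 4 = (a + b + 2) + 1 + 1 by ring]
    rw [Nat.factorial_succ, Nat.factorial_succ]
    ring
  rw [e]
  exact Nat.mul_le_mul_right _ (by nlinarith [two_mul_le_add_sq a b])

lemma edge_bound (L : ℝ) (hL : 1 ≤ L) (n : ℕ) (hn : 2 ≤ n) :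
    (n : ℝ) * mfun L (n - 1) ≤ 3 * (L ^ ((n : ℝ) - 3 / 2) * (n - 2).factorial) := by
  have hL0 : (0 : ℝ) < L := by linarith
  rcases Nat.lt_or_ge n 3 with h3 | h3
  · have : n = 2 := by omega
    subst this
    have h1 : mfun L 1 = 1 := by simp [mfun]
    norm_num [h1]
    have : (1 : ℝ) ≤ L ^ ((2 : ℝ) - 3 / 2) := one_le_rpow_aux L hL _ (by norm_num)
    have hf : (1 : ℝ) ≤ ((0 : ℕ).factorial : ℝ) := by norm_num
    nlinarith
  · obtain ⟨c, rfl⟩ : ∃ c, n = c + 3 := ⟨n - 3, by omega⟩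
    have hm : mfun L (c + 3 - 1) = L ^ (((c : ℝ) + 2) - 3 / 2) * (c.factorial : ℝ) := by
      simp only [mfun, show c + 3 - 1 = c + 2 by omega, if_neg (by omega : ¬ (c + 2 < 2)),
        show c + 2 - 2 = c by omega]
      push_cast
      ring_nf
    rw [hm]
    have hnat : ((c : ℝ) + 3) * (c.factorial : ℝ) ≤ 3 * ((c + 3 - 2).factorial : ℝ) := by
      rw [show c + 3 - 2 = c + 1 by omega]
      have : (c + 3) * c.factorial ≤ 3 * (c + 1).factorial := by
        rw [Nat.factorial_succ]; nlinarith
      exact_mod_cast this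
    have hrp : L ^ (((c : ℝ) + 2) - 3 / 2) ≤ L ^ (((c + 3 : ℕ) : ℝ) - 3 / 2) := by
      apply Real.rpow_le_rpow_of_exponent_le hL
      push_cast; linarith
    have h0 : (0 : ℝ) ≤ L ^ (((c : ℝ) + 2) - 3 / 2) := le_of_lt (Real.rpow_pos_of_pos hL0 _)
    have h0' : (0 : ℝ) ≤ L ^ (((c + 3 : ℕ) : ℝ) - 3 / 2) := le_of_lt (Real.rpow_pos_of_pos hL0 _)
    rw [show c + 3 - 2 = c + 1 by omega]
    push_cast at hrp h0' hnat ⊢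
    nlinarith [Nat.factorial_pos c, mul_le_mul hrp hnat (by positivity) h0']

lemma middle_bound (L : ℝ) (hL : 1 ≤ L) (a b : ℕ) :
    (((a + b + 4).choose (a + 2) : ℕ) : ℝ) * mfun L (a + 2) * mfun L (b + 2) ≤
      (hfun (a + 2) + hfun (b + 2)) *
        (L ^ (((a + b + 4 : ℕ) : ℝ) - 3 / 2) * ((a + b + 4 - 2).factorial : ℝ)) := by
  have hL0 : (0 : ℝ) < L := by linarith
  have hma : mfun L (a + 2) = L ^ (((a : ℝ) + 2) - 3 / 2) * (a.factorial : ℝ) := by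
    simp only [mfun, if_neg (by omega : ¬ (a + 2 < 2)), show a + 2 - 2 = a by omega]
    push_cast; ring_nf
  have hmb : mfun L (b + 2) = L ^ (((b : ℝ) + 2) - 3 / 2) * (b.factorial : ℝ) := by
    simp only [mfun, if_neg (by omega : ¬ (b + 2 < 2)), show b + 2 - 2 = b by omega]
    push_cast; ring_nf
  have hha : hfun (a + 2) = 8 / (((a : ℝ) + 2) * ((a : ℝ) + 1)) := by
    simp only [hfun, if_neg (by omega : ¬ (a + 2 = 0)), if_neg (by omega : ¬ (a + 2 = 1))]
    push_cast; ring_nf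
  have hhb : hfun (b + 2) = 8 / (((b : ℝ) + 2) * ((b : ℝ) + 1)) := by
    simp only [hfun, if_neg (by omega : ¬ (b + 2 = 0)), if_neg (by omega : ¬ (b + 2 = 1))]
    push_cast; ring_nf
  rw [hma, hmb, hha, hhb, show a + b + 4 - 2 = a + b + 2 by omega]
  -- combine the two rpow factors
  have hcomb : L ^ (((a : ℝ) + 2) - 3 / 2) * L ^ (((b : ℝ) + 2) - 3 / 2)
      = L ^ ((a : ℝ) + (b : ℝ) + 1) := by
    rw [← Real.rpow_add hL0]; ring_nf
  have hexp : L ^ ((a : ℝ) + (b : ℝ) + 1) ≤ L ^ (((a + b + 4 : ℕ) : ℝ) - 3 / 2) := by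
    apply Real.rpow_le_rpow_of_exponent_le hL
    push_cast; linarith
  -- the factorial inequality, in ℝ
  have hkey : (((a + b + 4).choose (a + 2) : ℕ) : ℝ) * (a.factorial : ℝ) * (b.factorial : ℝ) *
      ((((a : ℝ) + 2) * ((a : ℝ) + 1)) * (((b : ℝ) + 2) * ((b : ℝ) + 1))) ≤
      (8 * (((b : ℝ) + 2) * ((b : ℝ) + 1)) + ((a : ℝ) + 2) * ((a : ℝ) + 1) * 8) *
        ((a + b + 2).factorial : ℝ) := by
    have hnat : (a + b + 4).choose (a + 2) * a.factorial * b.factorial *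
        ((a + 2) * (a + 1) * ((b + 2) * (b + 1))) ≤
        (8 * ((b + 2) * (b + 1)) + (a + 2) * (a + 1) * 8) * (a + b + 2).factorial := by
      have hle : a + 2 ≤ a + b + 4 := by omega
      have hch : (a + b + 4).choose (a + 2) * (a + 2).factorial * (a + b + 4 - (a + 2)).factorial
          = (a + b + 4).factorial := Nat.choose_mul_factorial_mul_factorial hle
      rw [show a + b + 4 - (a + 2) = b + 2 by omega] at hch
      have hfa : (a + 2).factorial = (a + 2) * (a + 1) * a.factorial := by
        rw [show a + 2 = (a + 1) + 1 by ring, Nat.factorial_succ, Nat.factorial_succ]; ring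
      have hfb : (b + 2).factorial = (b + 2) * (b + 1) * b.factorial := by
        rw [show b + 2 = (b + 1) + 1 by ring, Nat.factorial_succ, Nat.factorial_succ]; ring
      calc (a + b + 4).choose (a + 2) * a.factorial * b.factorial *
            ((a + 2) * (a + 1) * ((b + 2) * (b + 1)))
          = (a + b + 4).choose (a + 2) * (a + 2).factorial * (b + 2).factorial := by
            rw [hfa, hfb]; ring
        _ = (a + b + 4).factorial := hch
        _ ≤ (8 * ((b + 2) * (b + 1)) + (a + 2) * (a + 1) * 8) * (a + b + 2).factorial :=
            nat_middle a b
    exact_mod_cast hnat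
  -- divide through
  have hpa : (0 : ℝ) < ((a : ℝ) + 2) * ((a : ℝ) + 1) := by positivity
  have hpb : (0 : ℝ) < ((b : ℝ) + 2) * ((b : ℝ) + 1) := by positivity
  have hdiv : (((a + b + 4).choose (a + 2) : ℕ) : ℝ) * (a.factorial : ℝ) * (b.factorial : ℝ) ≤
      (8 / (((a : ℝ) + 2) * ((a : ℝ) + 1)) + 8 / (((b : ℝ) + 2) * ((b : ℝ) + 1))) *
        ((a + b + 2).factorial : ℝ) := by
    rw [div_add_div _ _ (ne_of_gt hpa) (ne_of_gt hpb), div_mul_eq_mul_div,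
      le_div_iff₀ (by positivity)]
    nlinarith [hkey]
  calc (((a + b + 4).choose (a + 2) : ℕ) : ℝ) *
        (L ^ (((a : ℝ) + 2) - 3 / 2) * (a.factorial : ℝ)) *
        (L ^ (((b : ℝ) + 2) - 3 / 2) * (b.factorial : ℝ))
      = ((((a + b + 4).choose (a + 2) : ℕ) : ℝ) * (a.factorial : ℝ) * (b.factorial : ℝ)) *
        (L ^ (((a : ℝ) + 2) - 3 / 2) * L ^ (((b : ℝ) + 2) - 3 / 2)) := by ring
    _ = ((((a + b + 4).choose (a + 2) : ℕ) : ℝ) * (a.factorial : ℝ) * (b.factorial : ℝ)) *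
        L ^ ((a : ℝ) + (b : ℝ) + 1) := by rw [hcomb]
    _ ≤ ((8 / (((a : ℝ) + 2) * ((a : ℝ) + 1)) + 8 / (((b : ℝ) + 2) * ((b : ℝ) + 1))) *
        ((a + b + 2).factorial : ℝ)) * L ^ (((a + b + 4 : ℕ) : ℝ) - 3 / 2) := by
        apply mul_le_mul hdiv hexp (le_of_lt (Real.rpow_pos_of_pos hL0 _)) (by positivity)
    _ = (8 / (((a : ℝ) + 2) * ((a : ℝ) + 1)) + 8 / (((b : ℝ) + 2) * ((b : ℝ) + 1))) *
        (L ^ (((a + b + 4 : ℕ) : ℝ) - 3 / 2) * ((a + b + 2).factorial : ℝ)) := by ring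

lemma pointwise_bound (L : ℝ) (hL : 1 ≤ L) (n k : ℕ) (hn : 2 ≤ n) (hk : k ≤ n) :
    ((n.choose k : ℕ) : ℝ) * mfun L k * mfun L (n - k) ≤
      (hfun k + hfun (n - k)) * (L ^ ((n : ℝ) - 3 / 2) * ((n - 2).factorial : ℝ)) := by
  have hL0 : (0 : ℝ) < L := by linarith
  have hT1 : (1 : ℝ) ≤ L ^ ((n : ℝ) - 3 / 2) * ((n - 2).factorial : ℝ) := by
    have h1 : (1 : ℝ) ≤ L ^ ((n : ℝ) - 3 / 2) := by
      apply one_le_rpow_aux L hL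
      have : (2 : ℝ) ≤ (n : ℝ) := by exact_mod_cast hn
      linarith
    have h2 : (1 : ℝ) ≤ ((n - 2).factorial : ℝ) := by exact_mod_cast (n - 2).factorial_pos
    nlinarith
  have hT0 : (0 : ℝ) ≤ L ^ ((n : ℝ) - 3 / 2) * ((n - 2).factorial : ℝ) := by linarith
  have hmn : mfun L n = L ^ ((n : ℝ) - 3 / 2) * ((n - 2).factorial : ℝ) := by
    simp only [mfun, if_neg (by omega : ¬ (n < 2))]
  by_cases hk0 : k = 0
  · subst hk0
    simp only [Nat.choose_zero_right, Nat.cast_one, Nat.sub_zero, one_mul]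
    rw [show mfun L 0 = 1 by simp [mfun], one_mul, hmn]
    have h0 : hfun 0 = 1 := by simp [hfun]
    nlinarith [hfun_nonneg n]
  by_cases hkn : k = n
  · subst hkn
    simp only [Nat.choose_self, Nat.cast_one, Nat.sub_self, one_mul]
    rw [show mfun L 0 = 1 by simp [mfun], mul_one, hmn]
    have h0 : hfun 0 = 1 := by simp [hfun]
    nlinarith [hfun_nonneg k]
  by_cases hk1 : k = 1
  · subst hk1
    rw [Nat.choose_one_right, show mfun L 1 = 1 by simp [mfun], mul_one]
    have h3 : hfun 1 = 3 := by simp [hfun]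
    have := edge_bound L hL n hn
    nlinarith [hfun_nonneg (n - 1)]
  by_cases hkn1 : k = n - 1
  · subst hkn1
    rw [show n - (n - 1) = 1 by omega, show mfun L 1 = 1 by simp [mfun], mul_one]
    rw [show n.choose (n - 1) = n by
      rw [Nat.choose_symm (by omega : 1 ≤ n), Nat.choose_one_right]]
    have h3 : hfun 1 = 3 := by simp [hfun]
    have := edge_bound L hL n hn
    nlinarith [hfun_nonneg (n - 1)]
  · -- middle case
    obtain ⟨a, rfl⟩ : ∃ a, k = a + 2 := ⟨k - 2, by omega⟩
    obtain ⟨b, rfl⟩ : ∃ b, n = a + b + 4 := ⟨n - (a + 2) - 2, by omega⟩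
    rw [show a + b + 4 - (a + 2) = b + 2 by omega]
    exact middle_bound L hL a b

lemma binom_sum_bound (L : ℝ) (hL : 1 ≤ L) (n : ℕ) (hn : 2 ≤ n) :
    ∑ k ∈ range (n + 1), ((n.choose k : ℕ) : ℝ) * mfun L k * mfun L (n - k) ≤
      24 * (L ^ ((n : ℝ) - 3 / 2) * ((n - 2).factorial : ℝ)) := by
  have hT0 : (0 : ℝ) ≤ L ^ ((n : ℝ) - 3 / 2) * ((n - 2).factorial : ℝ) := by
    have hL0 : (0 : ℝ) < L := by linarith
    positivity
  calc ∑ k ∈ range (n + 1), ((n.choose k : ℕ) : ℝ) * mfun L k * mfun L (n - k)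
      ≤ ∑ k ∈ range (n + 1),
        (hfun k + hfun (n - k)) * (L ^ ((n : ℝ) - 3 / 2) * ((n - 2).factorial : ℝ)) := by
        apply Finset.sum_le_sum
        intro k hkmem
        exact pointwise_bound L hL n k hn (by
          have := Finset.mem_range.mp hkmem; omega)
    _ = ((∑ k ∈ range (n + 1), hfun k) + ∑ k ∈ range (n + 1), hfun (n - k)) *
        (L ^ ((n : ℝ) - 3 / 2) * ((n - 2).factorial : ℝ)) := by
        rw [← Finset.sum_add_distrib, ← Finset.sum_mul]
    _ = (2 * ∑ k ∈ range (n + 1), hfun k) *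
        (L ^ ((n : ℝ) - 3 / 2) * ((n - 2).factorial : ℝ)) := by
        have hrefl : ∑ k ∈ range (n + 1), hfun (n - k) = ∑ k ∈ range (n + 1), hfun k := by
          have := Finset.sum_range_reflect (fun j => hfun j) (n + 1)
          simpa using this
        rw [hrefl]; ring
    _ ≤ 24 * (L ^ ((n : ℝ) - 3 / 2) * ((n - 2).factorial : ℝ)) := by
        have := hfun_sum_le (n + 1)
        nlinarith

theorem my_iter_leibniz {A : Type} [NormedCommRing A] [NormedAlgebra ℝ A]
    (D : A →ₗ[ℝ] A) (hD : ∀ x y : A, D (x * y) = x * D y + D x * y)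
    (x y : A) (n : ℕ) :
    (⇑D)^[n] (x * y) = ∑ ij ∈ antidiagonal n,
      n.choose ij.1 • ((⇑D)^[ij.1] x * (⇑D)^[ij.2] y) := by
  induction n with
  | zero => simp
  | succ n ih =>
    rw [sum_antidiagonal_choose_succ_nsmul (M := A) (fun i j => (⇑D)^[i] x * (⇑D)^[j] y) n]
    simp only [Function.iterate_succ_apply', ih, map_sum, map_nsmul, hD, smul_add,
      sum_add_distrib, add_right_inj]
    refine sum_congr rfl fun ⟨i, j⟩ hij ↦ ?_
    rw [n.choose_symm_of_eq_add (mem_antidiagonal.1 hij).symm]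

theorem my_iter_leibniz' {A : Type} [NormedCommRing A] [NormedAlgebra ℝ A]
    (D : A →ₗ[ℝ] A) (hD : ∀ x y : A, D (x * y) = x * D y + D x * y)
    (x y : A) (n : ℕ) :
    (⇑D)^[n] (x * y) = ∑ k ∈ range (n + 1),
      n.choose k • ((⇑D)^[k] x * (⇑D)^[n - k] y) := by
  rw [my_iter_leibniz D hD x y n]
  exact sum_antidiagonal_eq_sum_range_succ (fun i j ↦ n.choose i • ((⇑D)^[i] x * (⇑D)^[j] y)) n

lemma deriv_step {A : Type} [NormedCommRing A] [NormedAlgebra ℝ A]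
    (D : A →ₗ[ℝ] A) (hD : ∀ x y : A, D (x * y) = x * D y + D x * y)
    (N : ℕ) (L : ℝ) (hL : 1 ≤ L) (x y : A) (a b : ℝ) (ha : 1 ≤ a) (hb : 1 ≤ b)
    (hx : ∀ n : ℕ, 2 ≤ n → n ≤ N →
      ‖(⇑D)^[n] x‖ ≤ a * (L ^ ((n : ℝ) - 3 / 2) * ((n - 2).factorial : ℝ)))
    (hy : ∀ n : ℕ, 2 ≤ n → n ≤ N →
      ‖(⇑D)^[n] y‖ ≤ b * (L ^ ((n : ℝ) - 3 / 2) * ((n - 2).factorial : ℝ))) :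
    ∀ n : ℕ, 2 ≤ n → n ≤ N → ‖(⇑D)^[n] (x * y)‖ ≤
      (26 * (a * (1 + ‖x‖ + ‖D x‖)) * (b * (1 + ‖y‖ + ‖D y‖))) *
        (L ^ ((n : ℝ) - 3 / 2) * ((n - 2).factorial : ℝ)) := by
  intro n hn2 hnN
  set wx := 1 + ‖x‖ + ‖D x‖ with hwx
  set wy := 1 + ‖y‖ + ‖D y‖ with hwy
  have hwx1 : 1 ≤ wx := by
    have := norm_nonneg x; have := norm_nonneg (D x); rw [hwx]; linarith
  have hwy1 : 1 ≤ wy := by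
    have := norm_nonneg y; have := norm_nonneg (D y); rw [hwy]; linarith
  have ha0 : (0 : ℝ) ≤ a := by linarith
  have hb0 : (0 : ℝ) ≤ b := by linarith
  have hawx : (0 : ℝ) ≤ a * wx := by nlinarith
  have hbwy : (0 : ℝ) ≤ b * wy := by nlinarith
  have hmx : ∀ k : ℕ, k ≤ N → ‖(⇑D)^[k] x‖ ≤ a * wx * mfun L k := by
    intro k hkN
    match k, hkN with
    | 0, _ =>
      rw [show mfun L 0 = 1 by simp [mfun]]
      simp only [Function.iterate_zero, id_eq]
      nlinarith [norm_nonneg x, norm_nonneg (D x)]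
    | 1, _ =>
      rw [show mfun L 1 = 1 by simp [mfun]]
      simp only [Function.iterate_one]
      nlinarith [norm_nonneg x, norm_nonneg (D x)]
    | (k + 2), hkN =>
      have h := hx (k + 2) (by omega) hkN
      have hmk : mfun L (k + 2) = L ^ (((k + 2 : ℕ) : ℝ) - 3 / 2) * ((k + 2 - 2).factorial : ℝ) := by
        simp only [mfun, if_neg (by omega : ¬ (k + 2 < 2))]
      rw [hmk]
      have hT0 : (0 : ℝ) ≤ L ^ (((k + 2 : ℕ) : ℝ) - 3 / 2) * ((k + 2 - 2).factorial : ℝ) := by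
        have hL0 : (0 : ℝ) < L := by linarith
        positivity
      nlinarith [mul_le_mul_of_nonneg_right (mul_le_mul_of_nonneg_left hwx1 ha0) hT0]
  have hmy : ∀ k : ℕ, k ≤ N → ‖(⇑D)^[k] y‖ ≤ b * wy * mfun L k := by
    intro k hkN
    match k, hkN with
    | 0, _ =>
      rw [show mfun L 0 = 1 by simp [mfun]]
      simp only [Function.iterate_zero, id_eq]
      nlinarith [norm_nonneg y, norm_nonneg (D y)]
    | 1, _ =>
      rw [show mfun L 1 = 1 by simp [mfun]]
      simp only [Function.iterate_one]
      nlinarith [norm_nonneg y, norm_nonneg (D y)]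
    | (k + 2), hkN =>
      have h := hy (k + 2) (by omega) hkN
      have hmk : mfun L (k + 2) = L ^ (((k + 2 : ℕ) : ℝ) - 3 / 2) * ((k + 2 - 2).factorial : ℝ) := by
        simp only [mfun, if_neg (by omega : ¬ (k + 2 < 2))]
      rw [hmk]
      have hT0 : (0 : ℝ) ≤ L ^ (((k + 2 : ℕ) : ℝ) - 3 / 2) * ((k + 2 - 2).factorial : ℝ) := by
        have hL0 : (0 : ℝ) < L := by linarith
        positivity
      nlinarith [mul_le_mul_of_nonneg_right (mul_le_mul_of_nonneg_left hwy1 hb0) hT0]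
  have hT0 : (0 : ℝ) ≤ L ^ ((n : ℝ) - 3 / 2) * ((n - 2).factorial : ℝ) := by
    have hL0 : (0 : ℝ) < L := by linarith
    positivity
  calc ‖(⇑D)^[n] (x * y)‖
      = ‖∑ k ∈ range (n + 1), n.choose k • ((⇑D)^[k] x * (⇑D)^[n - k] y)‖ := by
        rw [my_iter_leibniz' D hD]
    _ ≤ ∑ k ∈ range (n + 1), ((n.choose k : ℕ) : ℝ) * (‖(⇑D)^[k] x‖ * ‖(⇑D)^[n - k] y‖) := by
        refine (norm_sum_le _ _).trans (Finset.sum_le_sum fun k _ => ?_)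
        rw [← Nat.cast_smul_eq_nsmul ℝ, norm_smul, Real.norm_natCast]
        exact mul_le_mul_of_nonneg_left (norm_mul_le _ _) (by positivity)
    _ ≤ ∑ k ∈ range (n + 1),
        ((n.choose k : ℕ) : ℝ) * ((a * wx * mfun L k) * (b * wy * mfun L (n - k))) := by
        apply Finset.sum_le_sum
        intro k hk
        have hk' : k ≤ n := by have := Finset.mem_range.mp hk; omega
        apply mul_le_mul_of_nonneg_left _ (by positivity)
        exact mul_le_mul (hmx k (le_trans hk' hnN))
          (hmy (n - k) (le_trans (Nat.sub_le n k) hnN)) (norm_nonneg _)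
          (mul_nonneg hawx (mfun_nonneg L hL k))
    _ = (a * wx) * (b * wy) *
        ∑ k ∈ range (n + 1), ((n.choose k : ℕ) : ℝ) * mfun L k * mfun L (n - k) := by
        rw [Finset.mul_sum]
        exact Finset.sum_congr rfl fun k _ => by ring
    _ ≤ (a * wx) * (b * wy) * (24 * (L ^ ((n : ℝ) - 3 / 2) * ((n - 2).factorial : ℝ))) := by
        exact mul_le_mul_of_nonneg_left (binom_sum_bound L hL n hn2) (mul_nonneg hawx hbwy)
    _ ≤ (26 * (a * wx) * (b * wy)) * (L ^ ((n : ℝ) - 3 / 2) * ((n - 2).factorial : ℝ)) := by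
        nlinarith [mul_nonneg (mul_nonneg hawx hbwy) hT0]

lemma w_mul {A : Type} [NormedCommRing A] [NormedAlgebra ℝ A]
    (D : A →ₗ[ℝ] A) (hD : ∀ x y : A, D (x * y) = x * D y + D x * y) (x y : A) :
    1 + ‖x * y‖ + ‖D (x * y)‖ ≤ (1 + ‖x‖ + ‖D x‖) * (1 + ‖y‖ + ‖D y‖) := by
  have h1 : ‖x * y‖ ≤ ‖x‖ * ‖y‖ := norm_mul_le x y
  have h2 : ‖D (x * y)‖ ≤ ‖x‖ * ‖D y‖ + ‖D x‖ * ‖y‖ := by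
    rw [hD]
    exact (norm_add_le _ _).trans (add_le_add (norm_mul_le _ _) (norm_mul_le _ _))
  nlinarith [norm_nonneg x, norm_nonneg y, norm_nonneg (D x), norm_nonneg (D y)]

/-- Lemma 2.2 (i). There is a universal constant `C₀ > 1` such that for
any commutative unital normed `ℝ`-algebra `A` (with submultiplicative norm), any
`ℝ`-linear derivation `D : A → A`, any `N ≥ 3`, `L ≥ 1`, and `u₁,…,u₅ ∈ A` with
`‖Dⁿ uᵢ‖ ≤ L^(n-3/2) (n-2)!` for `2 ≤ n ≤ N`, one has
`‖Dⁿ(u₁⋯u₅)‖ ≤ C₀ (1 + Σᵢ Σ_{l≤1} ‖D^l uᵢ‖)^16 L^(n-3/2) (n-2)!` for `2 ≤ n ≤ N`. -/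
theorem derivation_product_estimate_five :
    ∃ C₀ : ℝ, 1 < C₀ ∧
      ∀ (A : Type) [NormedCommRing A] [NormedAlgebra ℝ A] (D : A →ₗ[ℝ] A),
        (∀ x y : A, D (x * y) = x * D y + D x * y) →
        ∀ (N : ℕ), 3 ≤ N → ∀ (L : ℝ), 1 ≤ L → ∀ u : Fin 5 → A,
          (∀ i : Fin 5, ∀ n : ℕ, 2 ≤ n → n ≤ N →
            ‖(⇑D)^[n] (u i)‖ ≤ L ^ ((n : ℝ) - 3 / 2) * (n - 2).factorial) →
          ∀ n : ℕ, 2 ≤ n → n ≤ N →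
            ‖(⇑D)^[n] (∏ i, u i)‖ ≤
              C₀ * (1 + ∑ i : Fin 5, ∑ l ∈ Finset.range 2, ‖(⇑D)^[l] (u i)‖) ^ 16 *
                L ^ ((n : ℝ) - 3 / 2) * (n - 2).factorial := by
  refine ⟨456976, by norm_num, ?_⟩
  intro A _ _ D hD N hN3 L hL u hu
  have hL0 : (0 : ℝ) < L := by linarith
  set S := 1 + ∑ i : Fin 5, ∑ l ∈ Finset.range 2, ‖(⇑D)^[l] (u i)‖ with hSdef
  have hsum_i : ∀ i : Fin 5, ∑ l ∈ Finset.range 2, ‖(⇑D)^[l] (u i)‖ = ‖u i‖ + ‖D (u i)‖ := by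
    intro i
    rw [Finset.sum_range_succ, Finset.sum_range_one]
    simp
  have hw : ∀ i : Fin 5, 1 + ‖u i‖ + ‖D (u i)‖ ≤ S := by
    intro i
    rw [hSdef]
    have h1 : ∑ l ∈ Finset.range 2, ‖(⇑D)^[l] (u i)‖ ≤
        ∑ j : Fin 5, ∑ l ∈ Finset.range 2, ‖(⇑D)^[l] (u j)‖ :=
      Finset.single_le_sum (f := fun j => ∑ l ∈ Finset.range 2, ‖(⇑D)^[l] (u j)‖)
        (fun j _ => Finset.sum_nonneg fun l _ => norm_nonneg _) (Finset.mem_univ i)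
    rw [hsum_i i] at h1
    linarith
  have hw1 : ∀ i : Fin 5, (1 : ℝ) ≤ 1 + ‖u i‖ + ‖D (u i)‖ := by
    intro i; have := norm_nonneg (u i); have := norm_nonneg (D (u i)); linarith
  have hS1 : (1 : ℝ) ≤ S := le_trans (hw1 0) (hw 0)
  have hS0 : (0 : ℝ) ≤ S := by linarith
  have hT0 : ∀ m : ℕ, (0 : ℝ) ≤ L ^ ((m : ℝ) - 3 / 2) * ((m - 2).factorial : ℝ) := by
    intro m; positivity
  have mono : ∀ (x : A) (c c' : ℝ), c ≤ c' →
      (∀ m : ℕ, 2 ≤ m → m ≤ N →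
        ‖(⇑D)^[m] x‖ ≤ c * (L ^ ((m : ℝ) - 3 / 2) * ((m - 2).factorial : ℝ))) →
      ∀ m : ℕ, 2 ≤ m → m ≤ N →
        ‖(⇑D)^[m] x‖ ≤ c' * (L ^ ((m : ℝ) - 3 / 2) * ((m - 2).factorial : ℝ)) :=
    fun x c c' hcc hbd m h1 h2 =>
      (hbd m h1 h2).trans (mul_le_mul_of_nonneg_right hcc (hT0 m))
  have g1 : ∀ i : Fin 5, ∀ m : ℕ, 2 ≤ m → m ≤ N →
      ‖(⇑D)^[m] (u i)‖ ≤ 1 * (L ^ ((m : ℝ) - 3 / 2) * ((m - 2).factorial : ℝ)) := by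
    intro i m h1 h2
    rw [one_mul]
    exact hu i m h1 h2
  -- step 2
  have g2' := deriv_step D hD N L hL (u 0) (u 1) 1 1 le_rfl le_rfl (g1 0) (g1 1)
  have c2le : 26 * (1 * (1 + ‖u 0‖ + ‖D (u 0)‖)) * (1 * (1 + ‖u 1‖ + ‖D (u 1)‖)) ≤
      26 * S ^ 2 := by
    have key := mul_le_mul (hw 0) (hw 1) ((hw1 1).trans' zero_le_one) hS0
    calc 26 * (1 * (1 + ‖u 0‖ + ‖D (u 0)‖)) * (1 * (1 + ‖u 1‖ + ‖D (u 1)‖))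
        = 26 * ((1 + ‖u 0‖ + ‖D (u 0)‖) * (1 + ‖u 1‖ + ‖D (u 1)‖)) := by ring
      _ ≤ 26 * (S * S) := mul_le_mul_of_nonneg_left key (by norm_num)
      _ = 26 * S ^ 2 := by ring
  have g2 := mono _ _ _ c2le g2'
  have hc2 : (1 : ℝ) ≤ 26 * S ^ 2 := by nlinarith
  -- step 3
  have g3' := deriv_step D hD N L hL (u 0 * u 1) (u 2) (26 * S ^ 2) 1 hc2 le_rfl g2 (g1 2)
  have hp2 : 1 + ‖u 0 * u 1‖ + ‖D (u 0 * u 1)‖ ≤ S ^ 2 := by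
    have h := w_mul D hD (u 0) (u 1)
    have key := mul_le_mul (hw 0) (hw 1) ((hw1 1).trans' zero_le_one) hS0
    calc 1 + ‖u 0 * u 1‖ + ‖D (u 0 * u 1)‖ ≤ _ := h
      _ ≤ S * S := key
      _ = S ^ 2 := by ring
  have c3le : 26 * (26 * S ^ 2 * (1 + ‖u 0 * u 1‖ + ‖D (u 0 * u 1)‖)) *
      (1 * (1 + ‖u 2‖ + ‖D (u 2)‖)) ≤ 676 * S ^ 5 := by
    have key := mul_le_mul hp2 (hw 2) ((hw1 2).trans' zero_le_one) (by positivity : (0:ℝ) ≤ S ^ 2)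
    have hS2 : (0 : ℝ) ≤ 676 * S ^ 2 := by positivity
    calc 26 * (26 * S ^ 2 * (1 + ‖u 0 * u 1‖ + ‖D (u 0 * u 1)‖)) *
          (1 * (1 + ‖u 2‖ + ‖D (u 2)‖))
        = 676 * S ^ 2 * ((1 + ‖u 0 * u 1‖ + ‖D (u 0 * u 1)‖) * (1 + ‖u 2‖ + ‖D (u 2)‖)) := by
          ring
      _ ≤ 676 * S ^ 2 * (S ^ 2 * S) := mul_le_mul_of_nonneg_left key hS2
      _ = 676 * S ^ 5 := by ring
  have g3 := mono _ _ _ c3le g3'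
  have hc3 : (1 : ℝ) ≤ 676 * S ^ 5 := by nlinarith [one_le_pow₀ hS1 (n := 5)]
  -- step 4
  have g4' := deriv_step D hD N L hL (u 0 * u 1 * u 2) (u 3) (676 * S ^ 5) 1 hc3 le_rfl g3 (g1 3)
  have hp3 : 1 + ‖u 0 * u 1 * u 2‖ + ‖D (u 0 * u 1 * u 2)‖ ≤ S ^ 3 := by
    have h := w_mul D hD (u 0 * u 1) (u 2)
    have key := mul_le_mul hp2 (hw 2) ((hw1 2).trans' zero_le_one) (by positivity : (0:ℝ) ≤ S ^ 2)
    calc 1 + ‖u 0 * u 1 * u 2‖ + ‖D (u 0 * u 1 * u 2)‖ ≤ _ := h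
      _ ≤ S ^ 2 * S := key
      _ = S ^ 3 := by ring
  have c4le : 26 * (676 * S ^ 5 * (1 + ‖u 0 * u 1 * u 2‖ + ‖D (u 0 * u 1 * u 2)‖)) *
      (1 * (1 + ‖u 3‖ + ‖D (u 3)‖)) ≤ 17576 * S ^ 9 := by
    have key := mul_le_mul hp3 (hw 3) ((hw1 3).trans' zero_le_one) (by positivity : (0:ℝ) ≤ S ^ 3)
    have hS5 : (0 : ℝ) ≤ 17576 * S ^ 5 := by positivity
    calc 26 * (676 * S ^ 5 * (1 + ‖u 0 * u 1 * u 2‖ + ‖D (u 0 * u 1 * u 2)‖)) *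
          (1 * (1 + ‖u 3‖ + ‖D (u 3)‖))
        = 17576 * S ^ 5 * ((1 + ‖u 0 * u 1 * u 2‖ + ‖D (u 0 * u 1 * u 2)‖) *
          (1 + ‖u 3‖ + ‖D (u 3)‖)) := by ring
      _ ≤ 17576 * S ^ 5 * (S ^ 3 * S) := mul_le_mul_of_nonneg_left key hS5
      _ = 17576 * S ^ 9 := by ring
  have g4 := mono _ _ _ c4le g4'
  have hc4 : (1 : ℝ) ≤ 17576 * S ^ 9 := by nlinarith [one_le_pow₀ hS1 (n := 9)]
  -- step 5
  have g5' := deriv_step D hD N L hL (u 0 * u 1 * u 2 * u 3) (u 4) (17576 * S ^ 9) 1 hc4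
    le_rfl g4 (g1 4)
  have hp4 : 1 + ‖u 0 * u 1 * u 2 * u 3‖ + ‖D (u 0 * u 1 * u 2 * u 3)‖ ≤ S ^ 4 := by
    have h := w_mul D hD (u 0 * u 1 * u 2) (u 3)
    have key := mul_le_mul hp3 (hw 3) ((hw1 3).trans' zero_le_one) (by positivity : (0:ℝ) ≤ S ^ 3)
    calc 1 + ‖u 0 * u 1 * u 2 * u 3‖ + ‖D (u 0 * u 1 * u 2 * u 3)‖ ≤ _ := h
      _ ≤ S ^ 3 * S := key
      _ = S ^ 4 := by ring
  have c5le : 26 * (17576 * S ^ 9 * (1 + ‖u 0 * u 1 * u 2 * u 3‖ + ‖D (u 0 * u 1 * u 2 * u 3)‖)) *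
      (1 * (1 + ‖u 4‖ + ‖D (u 4)‖)) ≤ 456976 * S ^ 16 := by
    have key := mul_le_mul hp4 (hw 4) ((hw1 4).trans' zero_le_one) (by positivity : (0:ℝ) ≤ S ^ 4)
    have hS9 : (0 : ℝ) ≤ 456976 * S ^ 9 := by positivity
    have h16 : S ^ 14 ≤ S ^ 16 := pow_le_pow_right₀ hS1 (by norm_num)
    calc 26 * (17576 * S ^ 9 * (1 + ‖u 0 * u 1 * u 2 * u 3‖ + ‖D (u 0 * u 1 * u 2 * u 3)‖)) *
          (1 * (1 + ‖u 4‖ + ‖D (u 4)‖))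
        = 456976 * S ^ 9 * ((1 + ‖u 0 * u 1 * u 2 * u 3‖ + ‖D (u 0 * u 1 * u 2 * u 3)‖) *
          (1 + ‖u 4‖ + ‖D (u 4)‖)) := by ring
      _ ≤ 456976 * S ^ 9 * (S ^ 4 * S) := mul_le_mul_of_nonneg_left key hS9
      _ = 456976 * S ^ 14 := by ring
      _ ≤ 456976 * S ^ 16 := mul_le_mul_of_nonneg_left h16 (by norm_num)
  have g5 := mono _ _ _ c5le g5'
  intro n hn2 hnN
  rw [Fin.prod_univ_five]
  have h := g5 n hn2 hnN
  exact h.trans (le_of_eq (by ring))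
end

section
/- There exists a constant C > 1 with the following property. For every commutative unital normed ℝ-algebra A with submultiplicative norm, every ℝ-linear derivation D : A → A, every integer N ≥ 3, every real L ≥ 1, and all elements u₁, u₂ ∈ A satisfying ‖Dⁿ uᵢ‖ ≤ L^{n−3/2}·(n−2)! for all integers 2 ≤ n ≤ N and i ∈ {1,2}, one has ‖Dⁿ(u₁u₂)‖ ≤ C·(1 + Σ_{i=1}^{2} Σ_{l=0}^{1} ‖D^l uᵢ‖)²·L^{n−3/2}·(n−2)! for all integers 2 ≤ n ≤ N. -/
open Finset


private theorem iter_leibniz' {A : Type} [CommRing A] [Algebra ℝ A] (D : A →ₗ[ℝ] A)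
    (h : ∀ x y : A, D (x * y) = x * D y + D x * y) (p q : A) (n : ℕ) :
    (⇑D)^[n] (p * q) =
      ∑ k ∈ range n.succ, (n.choose k • ((⇑D)^[n - k] p * (⇑D)^[k] q)) := by
  induction n with
  | zero => simp [Finset.range]
  | succ n IH =>
    have hD : ∀ x y : A, D (x * y) = D x * y + x * D y := fun x y => by rw [h]; ring
    calc
      (⇑D)^[n + 1] (p * q) =
          D (∑ k ∈ range n.succ,
              n.choose k • ((⇑D)^[n - k] p * (⇑D)^[k] q)) := by
        rw [Function.iterate_succ_apply', IH]
      _ = (∑ k ∈ range n.succ,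
            n.choose k • ((⇑D)^[n - k + 1] p * (⇑D)^[k] q)) +
          ∑ k ∈ range n.succ,
            n.choose k • ((⇑D)^[n - k] p * (⇑D)^[k + 1] q) := by
        rw [map_sum]
        simp_rw [map_nsmul, hD, Function.iterate_succ_apply',
          smul_add, sum_add_distrib]
      _ = (∑ k ∈ range n.succ,
                n.choose k.succ • ((⇑D)^[n - k] p * (⇑D)^[k + 1] q)) +
              1 • ((⇑D)^[n + 1] p * (⇑D)^[0] q) +
            ∑ k ∈ range n.succ, n.choose k • ((⇑D)^[n - k] p * (⇑D)^[k + 1] q) :=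
        ?_
      _ = ((∑ k ∈ range n.succ, n.choose k • ((⇑D)^[n - k] p * (⇑D)^[k + 1] q)) +
              ∑ k ∈ range n.succ,
                n.choose k.succ • ((⇑D)^[n - k] p * (⇑D)^[k + 1] q)) +
            1 • ((⇑D)^[n + 1] p * (⇑D)^[0] q) := by
        rw [add_comm, add_assoc]
      _ = (∑ i ∈ range n.succ,
              (n + 1).choose (i + 1) • ((⇑D)^[n + 1 - (i + 1)] p * (⇑D)^[i + 1] q)) +
            1 • ((⇑D)^[n + 1] p * (⇑D)^[0] q) := by
        simp_rw [Nat.choose_succ_succ, Nat.succ_sub_succ, add_smul, sum_add_distrib]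
      _ = ∑ k ∈ range n.succ.succ,
            n.succ.choose k • ((⇑D)^[n.succ - k] p * (⇑D)^[k] q) := by
        rw [sum_range_succ' _ n.succ, Nat.choose_zero_right, tsub_zero]
    congr
    refine (sum_range_succ' _ _).trans (congr_arg₂ (· + ·) ?_ ?_)
    · rw [sum_range_succ, Nat.choose_succ_self, zero_smul, add_zero]
      refine sum_congr rfl fun k hk => ?_
      rw [mem_range] at hk
      congr
      omega
    · rw [Nat.choose_zero_right, tsub_zero]


private lemma tele_eq' (m : ℕ) :
    ∑ k ∈ Icc 2 (m+1), (1:ℝ)/((k:ℝ)*((k:ℝ)-1)) = 1 - 1/((m:ℝ)+1) := by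
  induction m with
  | zero => simp
  | succ p ih =>
    rw [show p+1+1 = (p+1)+1 from rfl, Finset.sum_Icc_succ_top (by omega), ih]
    have h1 : ((p:ℝ)+1) ≠ 0 := by positivity
    have h2 : ((p:ℝ)+2) ≠ 0 := by positivity
    push_cast
    field_simp
    ring

private lemma tele_le' (m : ℕ) :
    ∑ k ∈ Icc 2 (m+1), (1:ℝ)/((k:ℝ)*((k:ℝ)-1)) ≤ 1 := by
  rw [tele_eq']
  have : (0:ℝ) ≤ 1/((m:ℝ)+1) := by positivity
  linarith

private lemma mid_bound' (a b : ℕ) :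
    (((a+b+4).choose (a+2) : ℝ)) * (a.factorial) * (b.factorial) ≤
      8 * ((a+b+2).factorial) *
        (1/(((a:ℝ)+2)*(((a:ℝ)+2)-1)) + 1/(((b:ℝ)+2)*(((b:ℝ)+2)-1))) := by
  have h' : a + 2 ≤ a + b + 4 := by omega
  have h0 := Nat.choose_mul_factorial_mul_factorial h'
  rw [show a + b + 4 - (a+2) = b + 2 by omega] at h0
  have h : ((a+b+4).choose (a+2) : ℝ) * ((a+2).factorial) * ((b+2).factorial)
      = ((a+b+4).factorial) := by exact_mod_cast congrArg (Nat.cast : ℕ → ℝ) h0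
  have e1 : ((a+2).factorial : ℝ) = ((a:ℝ)+2)*(((a:ℝ)+1)*(a.factorial)) := by
    rw [show a+2 = (a+1)+1 from rfl, Nat.factorial_succ, Nat.factorial_succ]
    push_cast; ring
  have e2 : ((b+2).factorial : ℝ) = ((b:ℝ)+2)*(((b:ℝ)+1)*(b.factorial)) := by
    rw [show b+2 = (b+1)+1 from rfl, Nat.factorial_succ, Nat.factorial_succ]
    push_cast; ring
  have e3 : ((a+b+4).factorial : ℝ) =
      ((a:ℝ)+(b:ℝ)+4)*(((a:ℝ)+(b:ℝ)+3)*((a+b+2).factorial)) := by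
    rw [show a+b+4 = (a+b+3)+1 from rfl, Nat.factorial_succ,
      show a+b+3 = (a+b+2)+1 from rfl, Nat.factorial_succ]
    push_cast; ring
  have hda : (0:ℝ) < ((a:ℝ)+2)*(((a:ℝ)+2)-1) := by nlinarith [Nat.cast_nonneg (α := ℝ) a]
  have hdb : (0:ℝ) < ((b:ℝ)+2)*(((b:ℝ)+2)-1) := by nlinarith [Nat.cast_nonneg (α := ℝ) b]
  have hF : (0:ℝ) ≤ ((a+b+2).factorial : ℝ) := by exact_mod_cast (a+b+2).factorial_pos.le
  rw [e1, e2, e3] at h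
  rw [div_add_div _ _ (ne_of_gt hda) (ne_of_gt hdb), ← mul_div_assoc, le_div_iff₀ (by positivity)]
  have ha0 : (0:ℝ) ≤ a := Nat.cast_nonneg a
  have hb0 : (0:ℝ) ≤ b := Nat.cast_nonneg b
  nlinarith [h, hF, sq_nonneg ((a:ℝ) - b), mul_pos hda hdb,
    mul_nonneg (mul_nonneg ha0 hb0) hF, mul_nonneg ha0 hF, mul_nonneg hb0 hF,
    mul_nonneg (mul_nonneg ha0 ha0) hF, mul_nonneg (mul_nonneg hb0 hb0) hF,
    mul_nonneg (mul_nonneg (mul_nonneg ha0 hb0) ha0) hF,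
    mul_nonneg (mul_nonneg (mul_nonneg ha0 hb0) hb0) hF]

private lemma exp_add_le (a b : ℕ) (L : ℝ) (hL : 1 ≤ L) (hL0 : (0:ℝ) < L) :
    L ^ ((((((b+2)) : ℕ):ℝ)-3/2) + (((((a+2)) : ℕ):ℝ)-3/2))
      ≤ L ^ ((((a+b+4) : ℕ):ℝ) - 3/2) := by
  apply Real.rpow_le_rpow_of_exponent_le hL
  push_cast; linarith

private lemma mid_rhs_nonneg (a b : ℕ) :
    (0:ℝ) ≤ 8 * (((a+b+2).factorial : ℕ) : ℝ) *
      (1/(((a:ℝ)+2)*(((a:ℝ)+2)-1)) + 1/(((b:ℝ)+2)*(((b:ℝ)+2)-1))) := by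
  have hda : (0:ℝ) < ((a:ℝ)+2)*(((a:ℝ)+2)-1) := by nlinarith [Nat.cast_nonneg (α := ℝ) a]
  have hdb : (0:ℝ) < ((b:ℝ)+2)*(((b:ℝ)+2)-1) := by nlinarith [Nat.cast_nonneg (α := ℝ) b]
  positivity

set_option maxHeartbeats 2000000 in
/-- estimate (2.10). There is a universal constant `C > 1` such that for
any commutative unital normed `ℝ`-algebra `A` (with submultiplicative norm), any
`ℝ`-linear derivation `D : A → A`, any `N ≥ 3`, `L ≥ 1`, and `u₁, u₂ ∈ A` with
`‖Dⁿ uᵢ‖ ≤ L^(n-3/2) (n-2)!` for `2 ≤ n ≤ N`, one has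
`‖Dⁿ(u₁u₂)‖ ≤ C (1 + Σᵢ Σ_{l≤1} ‖D^l uᵢ‖)² L^(n-3/2) (n-2)!` for `2 ≤ n ≤ N`. -/
theorem derivation_product_estimate_two :
    ∃ C : ℝ, 1 < C ∧
      ∀ (A : Type) [NormedCommRing A] [NormedAlgebra ℝ A] (D : A →ₗ[ℝ] A),
        (∀ x y : A, D (x * y) = x * D y + D x * y) →
        ∀ (N : ℕ), 3 ≤ N → ∀ (L : ℝ), 1 ≤ L → ∀ u₁ u₂ : A,
          (∀ n : ℕ, 2 ≤ n → n ≤ N →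
            ‖(⇑D)^[n] u₁‖ ≤ L ^ ((n : ℝ) - 3 / 2) * (n - 2).factorial) →
          (∀ n : ℕ, 2 ≤ n → n ≤ N →
            ‖(⇑D)^[n] u₂‖ ≤ L ^ ((n : ℝ) - 3 / 2) * (n - 2).factorial) →
          ∀ n : ℕ, 2 ≤ n → n ≤ N →
            ‖(⇑D)^[n] (u₁ * u₂)‖ ≤
              C * (1 + (‖u₁‖ + ‖D u₁‖ + (‖u₂‖ + ‖D u₂‖))) ^ 2 *
                L ^ ((n : ℝ) - 3 / 2) * (n - 2).factorial := by
  refine ⟨20, by norm_num, ?_⟩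
  intro A _ _ D hD N hN L hL u₁ u₂ h₁ h₂ n hn2 hnN
  have hL0 : (0:ℝ) < L := lt_of_lt_of_le one_pos hL
  set S := ‖u₁‖ + ‖D u₁‖ + (‖u₂‖ + ‖D u₂‖) with hSdef
  have hS : 0 ≤ S := by positivity
  clear_value S
  have key : ‖(⇑D)^[n] (u₁*u₂)‖ ≤
      ∑ k ∈ range (n+1), (n.choose k : ℝ) * (‖(⇑D)^[n-k] u₁‖ * ‖(⇑D)^[k] u₂‖) := by
    rw [iter_leibniz' D hD]
    refine (norm_sum_le _ _).trans (Finset.sum_le_sum fun k _ => ?_)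
    rw [← Nat.cast_smul_eq_nsmul ℝ, norm_smul, Real.norm_natCast]
    exact mul_le_mul_of_nonneg_left (norm_mul_le _ _) (by positivity)
  rcases eq_or_lt_of_le hn2 with h2 | h3
  · -- case n = 2
    subst h2
    simp only [show (2:ℕ)+1 = 3 from rfl, Finset.sum_range_succ, Finset.sum_range_zero,
      Function.iterate_zero, Function.iterate_one, id_eq] at key
    norm_num at key
    have A1 := h₁ 2 le_rfl (by omega)
    have A2 := h₂ 2 le_rfl (by omega)
    have hM : (1:ℝ) ≤ L ^ (((2:ℕ):ℝ) - 3/2) :=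
      Real.one_le_rpow hL (by norm_num)
    have e1 : (((2:ℕ) - 2).factorial : ℝ) = 1 := by norm_num
    rw [e1, mul_one]
    have n1 : (0:ℝ) ≤ ‖u₁‖ := norm_nonneg _
    have n2 : (0:ℝ) ≤ ‖u₂‖ := norm_nonneg _
    have d1 : (0:ℝ) ≤ ‖D u₁‖ := norm_nonneg _
    have d2 : (0:ℝ) ≤ ‖D u₂‖ := norm_nonneg _
    simp only [Function.iterate_succ, Function.iterate_zero, Function.comp_apply, id_eq,
      e1, mul_one] at A1 A2 ⊢
    nlinarith [mul_le_mul_of_nonneg_right A1 n2, mul_le_mul_of_nonneg_left A2 n1,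
      sq_nonneg (‖D u₁‖ - ‖D u₂‖), sq_nonneg (1 + S), hS, hM, hSdef,
      mul_nonneg hS (sub_nonneg.2 hM), mul_nonneg (mul_nonneg hS hS) (sub_nonneg.2 hM),
      norm_nonneg (D (D u₁)), norm_nonneg (D (D u₂))]
  · -- case n ≥ 3
    obtain ⟨m, rfl⟩ : ∃ m, n = m + 3 := ⟨n - 3, by omega⟩
    rw [show m + 3 - 2 = m + 1 by omega]
    set F : ℝ := (((m+1).factorial : ℕ) : ℝ) with hF
    have hF0 : (0:ℝ) < F := by rw [hF]; exact_mod_cast (m+1).factorial_pos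
    set M : ℝ := L ^ (((m+3 : ℕ):ℝ) - 3/2) * F with hM
    have hM0 : (0:ℝ) < M := by
      rw [hM]; exact mul_pos (Real.rpow_pos_of_pos hL0 _) hF0
    clear_value F M
    have n1 : (0:ℝ) ≤ ‖u₁‖ := norm_nonneg _
    have n2 : (0:ℝ) ≤ ‖u₂‖ := norm_nonneg _
    have d1 : (0:ℝ) ≤ ‖D u₁‖ := norm_nonneg _
    have d2 : (0:ℝ) ≤ ‖D u₂‖ := norm_nonneg _
    have hc : (m+3).choose (m+2) = m+3 := by
      rw [show m+3 = (m+2)+1 from rfl, Nat.choose_succ_self_right]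
    have hsplit : range (m+3+1)
        = insert 0 (insert 1 (insert (m+2) (insert (m+3) (Icc 2 (m+1))))) := by
      ext x; simp only [mem_range, mem_insert, mem_Icc]; omega
    rw [hsplit, sum_insert (by simp only [mem_insert, mem_Icc]; omega),
      sum_insert (by simp only [mem_insert, mem_Icc]; omega),
      sum_insert (by simp only [mem_insert, mem_Icc]; omega),
      sum_insert (by simp only [mem_Icc]; omega)] at key
    simp only [Nat.choose_zero_right, Nat.choose_one_right, Nat.choose_self, hc,
      Function.iterate_zero, Function.iterate_one, id_eq, Nat.cast_one, one_mul,
      Nat.sub_zero, Nat.sub_self, show m+3-1 = m+2 by omega,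
      show m+3-(m+2) = 1 by omega] at key
    -- individual bounds
    have A1 := h₁ (m+3) (by omega) hnN
    have A2 := h₂ (m+3) (by omega) hnN
    rw [show m+3-2 = m+1 by omega] at A1 A2
    have B0 : ‖(⇑D)^[m+3] u₁‖ * ‖u₂‖ ≤ ‖u₂‖ * M := by
      calc ‖(⇑D)^[m+3] u₁‖ * ‖u₂‖
          ≤ (L ^ (((m+3 : ℕ):ℝ) - 3/2) * (((m+1).factorial : ℕ) : ℝ)) * ‖u₂‖ :=
            mul_le_mul_of_nonneg_right A1 n2
        _ = ‖u₂‖ * M := by rw [hM, hF]; ring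
    have B3 : ‖u₁‖ * ‖(⇑D)^[m+3] u₂‖ ≤ ‖u₁‖ * M := by
      calc ‖u₁‖ * ‖(⇑D)^[m+3] u₂‖
          ≤ ‖u₁‖ * (L ^ (((m+3 : ℕ):ℝ) - 3/2) * (((m+1).factorial : ℕ) : ℝ)) :=
            mul_le_mul_of_nonneg_left A2 n1
        _ = ‖u₁‖ * M := by rw [hM, hF]
    have hmf0 : (0:ℝ) < ((m.factorial : ℕ) : ℝ) := by exact_mod_cast m.factorial_pos
    have hle : L ^ (((m+2 : ℕ):ℝ) - 3/2) ≤ L ^ (((m+3 : ℕ):ℝ) - 3/2) :=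
      Real.rpow_le_rpow_of_exponent_le hL (by push_cast; linarith)
    have key1 : ((m+3 : ℕ):ℝ) * (L ^ (((m+2 : ℕ):ℝ) - 3/2) * ((m.factorial : ℕ) : ℝ))
        ≤ 3 * M := by
      rw [hM, hF]
      have hFe : (((m+1).factorial : ℕ) : ℝ) = ((m:ℝ)+1) * ((m.factorial : ℕ) : ℝ) := by
        rw [Nat.factorial_succ]; push_cast; ring
      rw [hFe]
      calc ((m+3 : ℕ):ℝ) * (L ^ (((m+2 : ℕ):ℝ) - 3/2) * ((m.factorial : ℕ) : ℝ))
          ≤ (3*((m:ℝ)+1)) * (L ^ (((m+3 : ℕ):ℝ) - 3/2) * ((m.factorial : ℕ) : ℝ)) := by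
            refine mul_le_mul (by push_cast; linarith)
              (mul_le_mul_of_nonneg_right hle hmf0.le) (by positivity) (by positivity)
        _ = 3 * (L ^ (((m+3 : ℕ):ℝ) - 3/2) * (((m:ℝ)+1) * ((m.factorial : ℕ) : ℝ))) := by
            ring
    have C1 := h₁ (m+2) (by omega) (by omega)
    have C2 := h₂ (m+2) (by omega) (by omega)
    rw [show m+2-2 = m by omega] at C1 C2
    have B1 : ((m+3 : ℕ):ℝ) * (‖(⇑D)^[m+2] u₁‖ * ‖D u₂‖) ≤ 3 * ‖D u₂‖ * M := by
      calc ((m+3 : ℕ):ℝ) * (‖(⇑D)^[m+2] u₁‖ * ‖D u₂‖)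
          ≤ ((m+3 : ℕ):ℝ) * ((L ^ (((m+2 : ℕ):ℝ) - 3/2) * ((m.factorial : ℕ) : ℝ)) * ‖D u₂‖) := by
            gcongr
        _ = (((m+3 : ℕ):ℝ) * (L ^ (((m+2 : ℕ):ℝ) - 3/2) * ((m.factorial : ℕ) : ℝ))) * ‖D u₂‖ := by
            ring
        _ ≤ (3 * M) * ‖D u₂‖ := mul_le_mul_of_nonneg_right key1 d2
        _ = 3 * ‖D u₂‖ * M := by ring
    have B2 : ((m+3 : ℕ):ℝ) * (‖D u₁‖ * ‖(⇑D)^[m+2] u₂‖) ≤ 3 * ‖D u₁‖ * M := by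
      calc ((m+3 : ℕ):ℝ) * (‖D u₁‖ * ‖(⇑D)^[m+2] u₂‖)
          ≤ ((m+3 : ℕ):ℝ) * (‖D u₁‖ * (L ^ (((m+2 : ℕ):ℝ) - 3/2) * ((m.factorial : ℕ) : ℝ))) := by
            gcongr
        _ = (((m+3 : ℕ):ℝ) * (L ^ (((m+2 : ℕ):ℝ) - 3/2) * ((m.factorial : ℕ) : ℝ))) * ‖D u₁‖ := by
            ring
        _ ≤ (3 * M) * ‖D u₁‖ := mul_le_mul_of_nonneg_right key1 d1
        _ = 3 * ‖D u₁‖ * M := by ring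
    -- middle terms
    have Bmid : ∑ k ∈ Icc 2 (m+1),
        (((m+3).choose k : ℝ) * (‖(⇑D)^[m+3-k] u₁‖ * ‖(⇑D)^[k] u₂‖)) ≤ 16 * M := by
      have per : ∀ k ∈ Icc 2 (m+1),
          ((m+3).choose k : ℝ) * (‖(⇑D)^[m+3-k] u₁‖ * ‖(⇑D)^[k] u₂‖)
          ≤ 8 * M * (1/((k:ℝ)*((k:ℝ)-1))
              + 1/((((m+3-k) : ℕ):ℝ)*((((m+3-k) : ℕ):ℝ)-1))) := by
        intro k hk
        rw [mem_Icc] at hk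
        obtain ⟨a, rfl⟩ : ∃ a, k = a+2 := ⟨k-2, by omega⟩
        obtain ⟨b, hb⟩ : ∃ b, m = a+b+1 := ⟨m-a-1, by omega⟩
        subst hb
        have hM' : M = L ^ ((((a+b+4) : ℕ):ℝ) - 3/2) * (((a+b+2).factorial : ℕ) : ℝ) := by
          rw [hM, hF, show a+b+1+3 = a+b+4 from by omega,
            show a+b+1+1 = a+b+2 from by omega]
        simp only [show a+b+1+3 - (a+2) = b+2 from by omega,
          show a+b+1+3 = a+b+4 from by omega]
        have Ha := h₁ (b+2) (by omega) (by omega)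
        have Hb := h₂ (a+2) (by omega) (by omega)
        rw [show b+2-2 = b from by omega] at Ha
        rw [show a+2-2 = a from by omega] at Hb
        calc ((a+b+4).choose (a+2) : ℝ) * (‖(⇑D)^[b+2] u₁‖ * ‖(⇑D)^[a+2] u₂‖)
            ≤ ((a+b+4).choose (a+2) : ℝ) *
                ((L ^ ((((b+2) : ℕ):ℝ)-3/2) * ((b.factorial : ℕ):ℝ)) *
                 (L ^ ((((a+2) : ℕ):ℝ)-3/2) * ((a.factorial : ℕ):ℝ))) := by
              gcongr
          _ = (((a+b+4).choose (a+2) : ℝ) * ((a.factorial : ℕ):ℝ) * ((b.factorial : ℕ):ℝ))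
                * (L ^ ((((b+2) : ℕ):ℝ)-3/2) * L ^ ((((a+2) : ℕ):ℝ)-3/2)) := by ring
          _ ≤ (8 * (((a+b+2).factorial : ℕ) : ℝ) *
                (1/(((a:ℝ)+2)*(((a:ℝ)+2)-1)) + 1/(((b:ℝ)+2)*(((b:ℝ)+2)-1))))
                * L ^ ((((a+b+4) : ℕ):ℝ) - 3/2) := by
              rw [← Real.rpow_add hL0]
              exact mul_le_mul (mid_bound' a b) (exp_add_le a b L hL hL0)
                (Real.rpow_nonneg hL0.le _) (mid_rhs_nonneg a b)
          _ = 8 * M * (1/(((a+2 : ℕ):ℝ)*(((a+2 : ℕ):ℝ)-1))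
                + 1/(((b+2 : ℕ):ℝ)*(((b+2 : ℕ):ℝ)-1))) := by
              rw [hM']; push_cast; ring
      calc ∑ k ∈ Icc 2 (m+1), (((m+3).choose k : ℝ) * (‖(⇑D)^[m+3-k] u₁‖ * ‖(⇑D)^[k] u₂‖))
          ≤ ∑ k ∈ Icc 2 (m+1), (8 * M * (1/((k:ℝ)*((k:ℝ)-1))
              + 1/((((m+3-k) : ℕ):ℝ)*((((m+3-k) : ℕ):ℝ)-1)))) := Finset.sum_le_sum per
        _ = 8 * M * ((∑ k ∈ Icc 2 (m+1), 1/((k:ℝ)*((k:ℝ)-1)))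
              + ∑ k ∈ Icc 2 (m+1), 1/((((m+3-k) : ℕ):ℝ)*((((m+3-k) : ℕ):ℝ)-1))) := by
            simp only [mul_add, Finset.sum_add_distrib, Finset.mul_sum]
        _ ≤ 8 * M * (1 + 1) := by
            have hrefl : (∑ k ∈ Icc 2 (m+1), 1/((((m+3-k) : ℕ):ℝ)*((((m+3-k) : ℕ):ℝ)-1)))
                = ∑ k ∈ Icc 2 (m+1), 1/((k:ℝ)*((k:ℝ)-1)) :=
              Finset.sum_nbij' (fun k => m+3-k) (fun k => m+3-k)
                (fun a ha => by simp only [mem_Icc] at *; omega)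
                (fun a ha => by simp only [mem_Icc] at *; omega)
                (fun a ha => by simp only [mem_Icc] at *; omega)
                (fun a ha => by simp only [mem_Icc] at *; omega)
                (fun a ha => rfl)
            rw [hrefl]
            have t := tele_le' m
            exact mul_le_mul_of_nonneg_left (add_le_add t t)
              (mul_nonneg (by norm_num) hM0.le)
        _ = 16 * M := by ring
    have total : ‖(⇑D)^[m+3] (u₁*u₂)‖
        ≤ (‖u₁‖ + ‖u₂‖ + 3*‖D u₁‖ + 3*‖D u₂‖ + 16) * M := by
      have expand : (‖u₁‖ + ‖u₂‖ + 3*‖D u₁‖ + 3*‖D u₂‖ + 16) * M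
          = ‖u₂‖*M + (3*‖D u₂‖*M + (3*‖D u₁‖*M + (‖u₁‖*M + 16*M))) := by ring
      rw [expand]
      linarith [key, B0, B1, B2, B3, Bmid]
    have hcoef : ‖u₁‖ + ‖u₂‖ + 3*‖D u₁‖ + 3*‖D u₂‖ + 16 ≤ 20*(1+S)^2 := by
      have h1 : ‖u₁‖ + ‖u₂‖ + 3*‖D u₁‖ + 3*‖D u₂‖ + 16 ≤ 3*S + 16 := by
        rw [hSdef]; linarith
      have h2 : 3*S + 16 ≤ 20*(1+S)^2 := by nlinarith [hS, sq_nonneg S]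
      linarith
    calc ‖(⇑D)^[m+3] (u₁*u₂)‖ ≤ (‖u₁‖ + ‖u₂‖ + 3*‖D u₁‖ + 3*‖D u₂‖ + 16) * M := total
      _ ≤ (20*(1+S)^2) * M := mul_le_mul_of_nonneg_right hcoef hM0.le
      _ = 20 * (1+S)^2 * L ^ (((m+3 : ℕ):ℝ) - 3/2) * F := by rw [hM]; ring
end

section
/- Let A be a commutative unital normed ℝ-algebra with submultiplicative norm and D : A → A an ℝ-linear derivation. Let C₁ > 1 be a constant such that for every integer N' ≥ 3, every real L' ≥ 1, and all v₁, v₂, v₃ ∈ A with ‖Dⁿ vᵢ‖ ≤ (L')^{n−1}·(n−2)! for all 2 ≤ n ≤ N', one has ‖Dⁿ(v₁v₂v₃)‖ ≤ C₁·(1 + Σ_{i=1}^{3} Σ_{l=0}^{1} ‖D^l vᵢ‖)^{6}·(L')^{n−1}·(n−2)! for all 2 ≤ n ≤ N'. Let N ≥ 3 be an integer, let u ∈ A be invertible, and let L be a real number with L ≥ ‖D²(u⁻¹)‖² + C₁²·(1 + Σ_{l=0}^{1} ( 2‖D^l(u⁻¹)‖ + ‖D^{1+l} u‖ ))^{12},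 and assume ‖Dⁿ u‖ ≤ L^{n−2}·(n−3)! for all integers 3 ≤ n ≤ N. Then ‖Dⁿ(u⁻¹)‖ ≤ L^{n−3/2}·(n−2)! for all integers 2 ≤ n ≤ N. -/
set_option maxHeartbeats 1600000 in
private lemma aux_num (na nb nc nd nev W s : ℝ) (hna : 0 ≤ na) (hnb : 0 ≤ nb) (hnc : 0 ≤ nc)
    (hnev : 0 ≤ nev) (hs0 : 0 ≤ s) (hnd0 : 0 ≤ nd) (h2na : 2*na ≤ s) (h2nb : 2*nb ≤ s)
    (hncs : nc ≤ s) (hnds : nd ≤ s) (hW1 : 1 ≤ W) (hev : nev ≤ W)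
    (hT6 : (1 + s)^6 ≤ W) :
    na * na * (W^2) + ((na*nb + nb*na)*nd + ((na*nb+nb*na)*nd
      + (na*nev + (nb*nb+nb*nb) + nev*na)*nc)) ≤ W^2 * W := by
  have hW0 : 0 ≤ W := by linarith
  have p1 : na*na ≤ s^2/4 := by nlinarith
  have p4 : nb*nb ≤ s^2/4 := by nlinarith
  have p2 : na*nb*nd ≤ s^2/4*s := by
    have h1 : na*nb ≤ s^2/4 := by nlinarith
    have := mul_le_mul h1 hnds hnd0 (by positivity)
    linarith
  have p3 : na*nev*nc ≤ (s/2)*W*s := by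
    have h1 : na*nev ≤ (s/2)*W := by nlinarith
    have := mul_le_mul h1 hncs hnc (by positivity)
    linarith
  have p5 : nb*nb*nc ≤ s^2/4*s := by
    have := mul_le_mul p4 hncs hnc (by positivity)
    linarith
  have step1 : na * na * (W^2) + ((na*nb + nb*na)*nd + ((na*nb+nb*na)*nd
      + (na*nev + (nb*nb+nb*nb) + nev*na)*nc)) ≤
      s^2/4*W^2 + s^3 + s^2*W + s^3/2 := by nlinarith [sq_nonneg W]
  have hw2 : 1 ≤ W^2 := by nlinarith
  have a1 : s^3 ≤ s^3*W^2 := by nlinarith [pow_nonneg hs0 3]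
  have a2 : s^2*W ≤ s^2*W^2 := by
    nlinarith [mul_nonneg (mul_nonneg (sq_nonneg s) hW0) (show (0:ℝ) ≤ W - 1 by linarith)]
  have step2 : s^2/4*W^2 + s^3 + s^2*W + s^3/2 ≤ W^2 * (5/4*s^2 + 3/2*s^3) := by
    nlinarith [a1, a2]
  have hbin : 5/4*s^2 + 3/2*s^3 ≤ (1+s)^6 := by
    have e : (1+s)^6 = 1+6*s+15*s^2+20*s^3+15*s^4+6*s^5+s^6 := by ring
    nlinarith [pow_nonneg hs0 4, pow_nonneg hs0 5, pow_nonneg hs0 6, pow_nonneg hs0 3, sq_nonneg s]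
  have step3 : W^2 * (5/4*s^2 + 3/2*s^3) ≤ W^2 * W := by
    have h := le_trans hbin hT6
    nlinarith [sq_nonneg W]
  linarith


private lemma aux_L (e c t L : ℝ) (he : 0 ≤ e) (hc : 1 < c) (ht : 1 ≤ t)
    (h : e ^ 2 + c ^ 2 * t ^ 12 ≤ L) :
    1 ≤ L ∧ c * t ^ 6 ≤ Real.sqrt L ∧ e ≤ Real.sqrt L ∧ t ^ 6 ≤ Real.sqrt L := by
  have ht6 : 1 ≤ t ^ 6 := one_le_pow₀ ht
  have ht12 : 1 ≤ t ^ 12 := one_le_pow₀ ht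
  have hL1 : 1 ≤ L := by nlinarith [sq_nonneg e, sq_nonneg c]
  have hL0 : (0:ℝ) ≤ L := by linarith
  have h1 : c * t ^ 6 ≤ Real.sqrt L := by
    apply (Real.le_sqrt (by positivity) hL0).mpr
    nlinarith [sq_nonneg e]
  have h2 : e ≤ Real.sqrt L := by
    apply (Real.le_sqrt he hL0).mpr
    nlinarith [sq_nonneg (c * t ^ 6)]
  refine ⟨hL1, h1, h2, le_trans ?_ h1⟩
  nlinarith [pow_nonneg (by linarith : (0:ℝ) ≤ t) 6]

set_option maxHeartbeats 1000000 in
/-- Lemma 2.3. Let `A` be a commutative unital normed `ℝ`-algebra with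
submultiplicative norm, `D` an `ℝ`-linear derivation on `A`, and `C₁ > 1` a constant
satisfying the triple-product estimate of Lemma 2.2 (ii). If `u` is invertible with
inverse `v`, `N ≥ 3`, and
`L ≥ ‖D²v‖² + C₁²(1 + Σ_{l≤1}(2‖D^l v‖ + ‖D^{1+l} u‖))^12`, and
`‖Dⁿ u‖ ≤ L^(n-2) (n-3)!` for all `3 ≤ n ≤ N`, then
`‖Dⁿ v‖ ≤ L^(n-3/2) (n-2)!` for all `2 ≤ n ≤ N`. -/
theorem derivation_inverse_estimate
    (A : Type) [NormedCommRing A] [NormedAlgebra ℝ A] (D : A →ₗ[ℝ] A)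
    (hD : ∀ x y : A, D (x * y) = x * D y + D x * y)
    (C₁ : ℝ) (hC₁ : 1 < C₁)
    (hC₁prop : ∀ (N' : ℕ), 3 ≤ N' → ∀ (L' : ℝ), 1 ≤ L' → ∀ v₁ v₂ v₃ : A,
      (∀ n : ℕ, 2 ≤ n → n ≤ N' →
        ‖(⇑D)^[n] v₁‖ ≤ L' ^ (n - 1) * (n - 2).factorial) →
      (∀ n : ℕ, 2 ≤ n → n ≤ N' →
        ‖(⇑D)^[n] v₂‖ ≤ L' ^ (n - 1) * (n - 2).factorial) →
      (∀ n : ℕ, 2 ≤ n → n ≤ N' →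
        ‖(⇑D)^[n] v₃‖ ≤ L' ^ (n - 1) * (n - 2).factorial) →
      ∀ n : ℕ, 2 ≤ n → n ≤ N' →
        ‖(⇑D)^[n] (v₁ * v₂ * v₃)‖ ≤
          C₁ * (1 + (‖v₁‖ + ‖D v₁‖ + (‖v₂‖ + ‖D v₂‖) + (‖v₃‖ + ‖D v₃‖))) ^ 6 *
            L' ^ (n - 1) * (n - 2).factorial)
    (N : ℕ) (hN : 3 ≤ N)
    (u v : A) (huv : u * v = 1)
    (L : ℝ)
    (hL : ‖(⇑D)^[2] v‖ ^ 2 +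
        C₁ ^ 2 * (1 + (2 * ‖v‖ + ‖D u‖ + (2 * ‖D v‖ + ‖(⇑D)^[2] u‖))) ^ 12 ≤ L)
    (hu : ∀ n : ℕ, 3 ≤ n → n ≤ N → ‖(⇑D)^[n] u‖ ≤ L ^ (n - 2) * (n - 3).factorial) :
    ∀ n : ℕ, 2 ≤ n → n ≤ N →
      ‖(⇑D)^[n] v‖ ≤ L ^ ((n : ℝ) - 3 / 2) * (n - 2).factorial := by
  -- basic facts about the derivation
  have hD1 : D (1 : A) = 0 := by
    have h := hD 1 1
    simp only [mul_one, one_mul] at h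
    exact (left_eq_add.mp h)
  have hDv : D v = -(v * v * D u) := by
    have h := hD u v
    rw [huv, hD1] at h
    have h0 : u * D v + D u * v = 0 := h.symm
    linear_combination v * h0 - D v * huv
  have hIterNeg : ∀ (k : ℕ) (x : A), (⇑D)^[k] (-x) = -((⇑D)^[k] x) := by
    intro k
    induction k with
    | zero => intro x; simp
    | succ k ih =>
      intro x
      rw [Function.iterate_succ_apply, Function.iterate_succ_apply, map_neg, ih]
  -- abbreviations
  have hTnn : 1 ≤ 1 + (2 * ‖v‖ + ‖D u‖ + (2 * ‖D v‖ + ‖(⇑D)^[2] u‖)) := by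
    linarith only [norm_nonneg v, norm_nonneg (D u), norm_nonneg (D v),
      norm_nonneg ((⇑D)^[2] u)]
  obtain ⟨hL1, hW, hev, hWT6⟩ := aux_L ‖(⇑D)^[2] v‖ C₁
    (1 + (2 * ‖v‖ + ‖D u‖ + (2 * ‖D v‖ + ‖(⇑D)^[2] u‖))) L (norm_nonneg _) hC₁ hTnn hL
  have hL0 : (0:ℝ) < L := by linarith only [hL1]
  have hW1 : 1 ≤ Real.sqrt L := by
    rw [show (1:ℝ) = Real.sqrt 1 by simp]
    exact Real.sqrt_le_sqrt hL1
  have hrpow : ∀ n : ℕ, 2 ≤ n → L ^ ((n : ℝ) - 3 / 2) = Real.sqrt L * L ^ (n - 2) := by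
    intro n hn
    rw [Real.sqrt_eq_rpow, ← Real.rpow_natCast L (n-2), ← Real.rpow_add hL0]
    congr 1
    push_cast [Nat.cast_sub hn]
    ring
  -- the n = 2 case
  have base2 : ‖(⇑D)^[2] v‖ ≤ L ^ (((2:ℕ) : ℝ) - 3 / 2) * (((2:ℕ) - 2).factorial : ℝ) := by
    rw [hrpow 2 le_rfl]
    simpa using hev
  -- main induction
  intro n
  induction n using Nat.strong_induction_on with
  | _ n ih =>
    intro h2n hnN
    rcases eq_or_lt_of_le h2n with h2 | h3n
    · exact h2 ▸ base2
    rcases eq_or_lt_of_le (by omega : 3 ≤ n) with h3 | h4n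
    · -- n = 3 : direct computation
      subst h3
      have key2 : (⇑D)^[2] (v * v * D u) = v * v * (⇑D)^[3] u
          + ((v * D v + D v * v) * (⇑D)^[2] u + ((v * D v + D v * v) * (⇑D)^[2] u
          + (v * (⇑D)^[2] v + (D v * D v + D v * D v) + (⇑D)^[2] v * v) * D u)) := by
        have e1 : D (v * v * D u) = v * v * D (D u) + (v * D v + D v * v) * D u := by
          rw [hD (v*v) (D u), hD v v]
        have e2 : (⇑D)^[2] (v * v * D u) = D (D (v * v * D u)) := rfl
        rw [e2, e1, map_add, hD (v*v) (D (D u)), hD v v,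
          hD (v * D v + D v * v) (D u), map_add, hD v (D v), hD (D v) v]
        have e3 : (⇑D)^[3] u = D (D (D u)) := rfl
        have e4 : (⇑D)^[2] u = D (D u) := rfl
        have e5 : (⇑D)^[2] v = D (D v) := rfl
        rw [e3, e4, e5]
        ring
      have key : (⇑D)^[3] v = -(v * v * (⇑D)^[3] u
          + ((v * D v + D v * v) * (⇑D)^[2] u + ((v * D v + D v * v) * (⇑D)^[2] u
          + (v * (⇑D)^[2] v + (D v * D v + D v * D v) + (⇑D)^[2] v * v) * D u))) := by
        have e0 : (⇑D)^[3] v = (⇑D)^[2] (D v) := by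
          rw [← Function.iterate_succ_apply]
        rw [e0]
        conv_lhs => rw [hDv]
        rw [hIterNeg, key2]
      rw [key, norm_neg]
      have hu3 : ‖(⇑D)^[3] u‖ ≤ L := by
        have := hu 3 le_rfl hnN
        simpa using this
      -- triangle + submultiplicativity
      have tri : ‖v * v * (⇑D)^[3] u
          + ((v * D v + D v * v) * (⇑D)^[2] u + ((v * D v + D v * v) * (⇑D)^[2] u
          + (v * (⇑D)^[2] v + (D v * D v + D v * D v) + (⇑D)^[2] v * v) * D u))‖ ≤
          ‖v‖ * ‖v‖ * L + ((‖v‖ * ‖D v‖ + ‖D v‖ * ‖v‖) * ‖(⇑D)^[2] u‖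
          + ((‖v‖ * ‖D v‖ + ‖D v‖ * ‖v‖) * ‖(⇑D)^[2] u‖
          + (‖v‖ * ‖(⇑D)^[2] v‖ + (‖D v‖ * ‖D v‖ + ‖D v‖ * ‖D v‖) + ‖(⇑D)^[2] v‖ * ‖v‖)
            * ‖D u‖)) := by
        have m1 : ‖v * v * (⇑D)^[3] u‖ ≤ ‖v‖ * ‖v‖ * L := by
          calc ‖v * v * (⇑D)^[3] u‖ ≤ ‖v * v‖ * ‖(⇑D)^[3] u‖ := norm_mul_le _ _
          _ ≤ (‖v‖ * ‖v‖) * L :=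
              mul_le_mul (norm_mul_le _ _) hu3 (norm_nonneg _) (by positivity)
        have m2 : ‖(v * D v + D v * v) * (⇑D)^[2] u‖ ≤
            (‖v‖ * ‖D v‖ + ‖D v‖ * ‖v‖) * ‖(⇑D)^[2] u‖ := by
          apply le_trans (norm_mul_le _ _)
          apply mul_le_mul_of_nonneg_right _ (norm_nonneg _)
          calc ‖v * D v + D v * v‖ ≤ ‖v * D v‖ + ‖D v * v‖ := norm_add_le _ _
          _ ≤ ‖v‖ * ‖D v‖ + ‖D v‖ * ‖v‖ := add_le_add (norm_mul_le _ _) (norm_mul_le _ _)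
        have m3 : ‖(v * (⇑D)^[2] v + (D v * D v + D v * D v) + (⇑D)^[2] v * v) * D u‖ ≤
            (‖v‖ * ‖(⇑D)^[2] v‖ + (‖D v‖ * ‖D v‖ + ‖D v‖ * ‖D v‖) + ‖(⇑D)^[2] v‖ * ‖v‖)
              * ‖D u‖ := by
          apply le_trans (norm_mul_le _ _)
          apply mul_le_mul_of_nonneg_right _ (norm_nonneg _)
          calc ‖v * (⇑D)^[2] v + (D v * D v + D v * D v) + (⇑D)^[2] v * v‖
              ≤ ‖v * (⇑D)^[2] v + (D v * D v + D v * D v)‖ + ‖(⇑D)^[2] v * v‖ :=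
                norm_add_le _ _
            _ ≤ ‖v * (⇑D)^[2] v‖ + ‖D v * D v + D v * D v‖ + ‖(⇑D)^[2] v * v‖ := by
                have h := norm_add_le (v * (⇑D)^[2] v) (D v * D v + D v * D v)
                linarith only [h]
            _ ≤ _ := by
                have a2 := norm_add_le (D v * D v) (D v * D v)
                have a3 := norm_mul_le (D v) (D v)
                refine add_le_add (add_le_add (norm_mul_le _ _) ?_) (norm_mul_le _ _)
                linarith only [a2, a3]
        have t1 := norm_add_le (v * v * (⇑D)^[3] u)
          ((v * D v + D v * v) * (⇑D)^[2] u + ((v * D v + D v * v) * (⇑D)^[2] u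
          + (v * (⇑D)^[2] v + (D v * D v + D v * D v) + (⇑D)^[2] v * v) * D u))
        have t2 := norm_add_le ((v * D v + D v * v) * (⇑D)^[2] u)
          ((v * D v + D v * v) * (⇑D)^[2] u
          + (v * (⇑D)^[2] v + (D v * D v + D v * D v) + (⇑D)^[2] v * v) * D u)
        have t3 := norm_add_le ((v * D v + D v * v) * (⇑D)^[2] u)
          ((v * (⇑D)^[2] v + (D v * D v + D v * D v) + (⇑D)^[2] v * v) * D u)
        linarith only [m1, m2, m3, t1, t2, t3]
      -- the numeric inequality
      have hWL : Real.sqrt L ^ 2 = L := Real.sq_sqrt (le_of_lt hL0)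
      have hT6 : (1 + (2*‖v‖ + 2*‖D v‖ + ‖D u‖ + ‖(⇑D)^[2] u‖)) ^ 6 ≤ Real.sqrt L := by
        rw [show (1 + (2*‖v‖ + 2*‖D v‖ + ‖D u‖ + ‖(⇑D)^[2] u‖))
          = 1 + (2 * ‖v‖ + ‖D u‖ + (2 * ‖D v‖ + ‖(⇑D)^[2] u‖)) from by ring]
        exact hWT6
      have hnum := aux_num ‖v‖ ‖D v‖ ‖D u‖ ‖(⇑D)^[2] u‖ ‖(⇑D)^[2] v‖ (Real.sqrt L)
        (2*‖v‖ + 2*‖D v‖ + ‖D u‖ + ‖(⇑D)^[2] u‖)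
        (norm_nonneg _) (norm_nonneg _) (norm_nonneg _) (norm_nonneg _)
        (by positivity) (norm_nonneg _)
        (by linarith only [norm_nonneg (D v), norm_nonneg (D u), norm_nonneg ((⇑D)^[2] u)])
        (by linarith only [norm_nonneg v, norm_nonneg (D u), norm_nonneg ((⇑D)^[2] u)])
        (by linarith only [norm_nonneg v, norm_nonneg (D v), norm_nonneg ((⇑D)^[2] u)])
        (by linarith only [norm_nonneg v, norm_nonneg (D v), norm_nonneg (D u)])
        hW1 hev hT6
      rw [hrpow 3 (by norm_num)]
      have hfin : Real.sqrt L * L ^ ((3:ℕ) - 2) * (((3:ℕ) - 2).factorial : ℝ)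
          = L * Real.sqrt L := by
        norm_num; ring
      rw [hfin]
      rw [hWL] at hnum
      calc _ ≤ _ := tri
        _ ≤ L * Real.sqrt L := by linarith only [hnum]
    · -- n ≥ 4 : inductive step
      obtain ⟨m, rfl⟩ : ∃ m, n = m + 1 := ⟨n - 1, by omega⟩
      have hm3 : 3 ≤ m := by omega
      have hm2 : 2 ≤ m := by omega
      have hmN : m ≤ N := by omega
      -- induction hypothesis in the form needed
      have Hv : ∀ k : ℕ, 2 ≤ k → k ≤ m → ‖(⇑D)^[k] v‖ ≤ L ^ (k - 1) * (k - 2).factorial := by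
        intro k hk2 hkm
        have hik := ih k (by omega) hk2 (by omega)
        calc ‖(⇑D)^[k] v‖ ≤ L ^ ((k : ℝ) - 3 / 2) * (k - 2).factorial := hik
        _ ≤ L ^ (k - 1) * (k - 2).factorial := by
            apply mul_le_mul_of_nonneg_right _ (by positivity)
            rw [← Real.rpow_natCast L (k-1)]
            apply Real.rpow_le_rpow_of_exponent_le hL1
            push_cast [Nat.cast_sub (by omega : 1 ≤ k)]
            linarith only []
      have Hu : ∀ k : ℕ, 2 ≤ k → k ≤ m → ‖(⇑D)^[k] (D u)‖ ≤ L ^ (k - 1) * (k - 2).factorial := by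
        intro k hk2 hkm
        rw [← Function.iterate_succ_apply]
        have h := hu (k+1) (by omega) (by omega)
        have e1 : k + 1 - 2 = k - 1 := by omega
        have e2 : k + 1 - 3 = k - 2 := by omega
        rwa [e1, e2] at h
      have key := hC₁prop m hm3 L hL1 v v (D u) Hv Hv Hu m hm2 le_rfl
      have hDDu : ‖D (D u)‖ = ‖(⇑D)^[2] u‖ := rfl
      have hTeq : (1 + (‖v‖ + ‖D v‖ + (‖v‖ + ‖D v‖) + (‖D u‖ + ‖D (D u)‖)))
          = 1 + (2 * ‖v‖ + ‖D u‖ + (2 * ‖D v‖ + ‖(⇑D)^[2] u‖)) := by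
        rw [hDDu]; ring
      rw [hTeq] at key
      have hneg : ‖(⇑D)^[m+1] v‖ = ‖(⇑D)^[m] (v * v * D u)‖ := by
        rw [Function.iterate_succ_apply, hDv, hIterNeg, norm_neg]
      have hfact : (((m+1) - 2).factorial : ℝ) = ((m - 1).factorial : ℝ) := by
        congr 1
      have hfle : ((m - 2).factorial : ℝ) ≤ ((m - 1).factorial : ℝ) := by
        exact_mod_cast Nat.factorial_le (by omega)
      have hpow_nonneg : (0:ℝ) ≤ L ^ (m - 1) := by positivity
      calc ‖(⇑D)^[m+1] v‖ = ‖(⇑D)^[m] (v * v * D u)‖ := hneg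
      _ ≤ C₁ * (1 + (2 * ‖v‖ + ‖D u‖ + (2 * ‖D v‖ + ‖(⇑D)^[2] u‖))) ^ 6 *
            L ^ (m - 1) * (m - 2).factorial := key
      _ ≤ Real.sqrt L * L ^ (m - 1) * (m - 1).factorial := by
          have h1 : C₁ * (1 + (2 * ‖v‖ + ‖D u‖ + (2 * ‖D v‖ + ‖(⇑D)^[2] u‖))) ^ 6 *
              L ^ (m - 1) ≤ Real.sqrt L * L ^ (m - 1) :=
            mul_le_mul_of_nonneg_right hW hpow_nonneg
          have h2 : (0:ℝ) ≤ Real.sqrt L * L ^ (m - 1) := by positivity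
          have h3 : (0:ℝ) ≤ C₁ * (1 + (2 * ‖v‖ + ‖D u‖ + (2 * ‖D v‖ + ‖(⇑D)^[2] u‖))) ^ 6 *
              L ^ (m - 1) := by positivity
          calc C₁ * (1 + (2 * ‖v‖ + ‖D u‖ + (2 * ‖D v‖ + ‖(⇑D)^[2] u‖))) ^ 6 *
              L ^ (m - 1) * (m - 2).factorial
              ≤ Real.sqrt L * L ^ (m - 1) * (m - 2).factorial :=
                mul_le_mul_of_nonneg_right h1 (by positivity)
            _ ≤ Real.sqrt L * L ^ (m - 1) * (m - 1).factorial :=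
                mul_le_mul_of_nonneg_left hfle h2
      _ = L ^ (((m+1 : ℕ) : ℝ) - 3 / 2) * ((m+1) - 2).factorial := by
          rw [hrpow (m+1) (by omega), hfact]
          have : m + 1 - 2 = m - 1 := by omega
          rw [this]
end

section
/- There exists a constant C > 0 such that for every integer n ≥ 4 one has Σ_{k=2}^{n−2} ( n! / (k!·(n−k)!) )·(k−2)!·(n−k−2)! ≤ C·(n−2)!. -/
private lemma fac_id' (m : ℕ) (h : 2 ≤ m) : m.factorial = m * (m-1) * (m-2).factorial := by
  obtain ⟨j, rfl⟩ : ∃ j, m = j + 2 := ⟨m-2, by omega⟩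
  simp [Nat.factorial_succ]; ring

private lemma tele_sum' : ∀ m : ℕ, 1 ≤ m →
    ∑ k ∈ Finset.Icc 2 m, (1:ℝ)/((k:ℝ)*((k:ℝ)-1)) = 1 - 1/m := by
  intro m hm
  induction m, hm using Nat.le_induction with
  | base => simp
  | succ m hm ih =>
    rw [Finset.sum_Icc_succ_top (by omega), ih]
    have hm' : (0:ℝ) < m := by exact_mod_cast hm
    push_cast
    field_simp [hm'.ne']
    ring

private lemma term_bound' (x N : ℝ) (hx : 2 ≤ x) (hxN : x ≤ N - 2) :
    1/((x*(x-1))*((N-x)*(N-x-1))) ≤ 4/(N*(N-1)) * (1/(x*(x-1)) + 1/((N-x)*(N-x-1))) := by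
  have ha : 0 < x*(x-1) := by nlinarith
  have hb : 0 < (N-x)*(N-x-1) := by nlinarith
  have hN0 : 0 < N*(N-1) := by nlinarith
  have key : N*(N-1) ≤ 4*((x*(x-1)) + (N-x)*(N-x-1)) := by nlinarith [sq_nonneg (2*x-N)]
  rw [div_add_div _ _ (ne_of_gt ha) (ne_of_gt hb), div_mul_div_comm,
    div_le_div_iff₀ (by positivity) (by positivity)]
  nlinarith [mul_le_mul_of_nonneg_right key (mul_pos ha hb).le]

private lemma term_eq' (n k : ℕ) (h2 : 2 ≤ k) (hk : k ≤ n - 2) (hn : 4 ≤ n) :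
    (n.choose k : ℝ) * (k - 2).factorial * (n - k - 2).factorial
      = (n.factorial : ℝ) / (((k:ℝ)*((k:ℝ)-1))*(((n:ℝ)-k)*((n:ℝ)-k-1))) := by
  have hkn : k ≤ n := by omega
  have hk1 : 1 ≤ k := by omega
  have hnk1 : 1 ≤ n - k := by omega
  have hnk2 : 2 ≤ n - k := by omega
  have hn2 : 2 ≤ n := by omega
  have hcf : (n.choose k) * k.factorial * (n-k).factorial = n.factorial :=
    Nat.choose_mul_factorial_mul_factorial hkn
  rw [fac_id' k h2, fac_id' (n-k) hnk2] at hcf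
  have hcfR := congrArg (Nat.cast : ℕ → ℝ) hcf
  push_cast [Nat.cast_sub hk1, Nat.cast_sub hkn, Nat.cast_sub hnk1, Nat.cast_sub hn2] at hcfR
  have hx : (2:ℝ) ≤ (k:ℝ) := by exact_mod_cast h2
  have hxN : (k:ℝ) ≤ (n:ℝ) - 2 := by
    have : (k:ℝ) ≤ ((n-2:ℕ):ℝ) := by exact_mod_cast hk
    push_cast [Nat.cast_sub hn2] at this; linarith
  have ha : (0:ℝ) < (k:ℝ)*((k:ℝ)-1) := by nlinarith
  have hb : (0:ℝ) < ((n:ℝ)-k)*((n:ℝ)-k-1) := by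
    have hN : (4:ℝ) ≤ (n:ℝ) := by exact_mod_cast hn
    nlinarith
  rw [eq_div_iff (by positivity)]
  linear_combination hcfR

private lemma reindex' (n : ℕ) (hn : 4 ≤ n) (g : ℕ → ℝ) :
    ∑ k ∈ Finset.Icc 2 (n-2), g (n - k) = ∑ k ∈ Finset.Icc 2 (n-2), g k := by
  apply Finset.sum_nbij' (fun k => n - k) (fun k => n - k)
  all_goals simp only [Finset.mem_Icc]; intros
  · omega
  · omega
  · omega
  · omega
  · trivial

/-- There is a constant `C > 0` with
`Σ_{k=2}^{n-2} C(n,k) (k-2)! (n-k-2)! ≤ C (n-2)!` for all integers `n ≥ 4`. -/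
theorem binomial_factorial_sum_estimate_one :
    ∃ C : ℝ, 0 < C ∧ ∀ n : ℕ, 4 ≤ n →
      ∑ k ∈ Finset.Icc 2 (n - 2),
          (n.choose k : ℝ) * (k - 2).factorial * (n - k - 2).factorial ≤
        C * (n - 2).factorial := by
  refine ⟨8, by norm_num, fun n hn => ?_⟩
  have hN : (4:ℝ) ≤ (n:ℝ) := by exact_mod_cast hn
  have hN0 : (0:ℝ) < (n:ℝ)*((n:ℝ)-1) := by nlinarith
  have hfpos : (0:ℝ) < (n.factorial : ℝ) := by exact_mod_cast n.factorial_pos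
  set g : ℕ → ℝ := fun j => 1/((j:ℝ)*((j:ℝ)-1)) with hg
  have step1 : ∑ k ∈ Finset.Icc 2 (n-2),
        (n.choose k : ℝ) * (k-2).factorial * (n-k-2).factorial
      ≤ ∑ k ∈ Finset.Icc 2 (n-2),
        (n.factorial:ℝ) * (4/((n:ℝ)*((n:ℝ)-1)) * (g k + g (n-k))) := by
    apply Finset.sum_le_sum
    intro k hk
    simp only [Finset.mem_Icc] at hk
    rw [term_eq' n k hk.1 hk.2 hn]
    have hx : (2:ℝ) ≤ (k:ℝ) := by exact_mod_cast hk.1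
    have hxN : (k:ℝ) ≤ (n:ℝ) - 2 := by
      have : (k:ℝ) ≤ ((n-2:ℕ):ℝ) := by exact_mod_cast hk.2
      push_cast [Nat.cast_sub (show 2 ≤ n by omega)] at this; linarith
    have hgk : g (n-k) = 1/(((n:ℝ)-k)*((n:ℝ)-k-1)) := by
      simp only [hg]
      rw [Nat.cast_sub (show k ≤ n by omega)]
    have hgk2 : g k = 1/((k:ℝ)*((k:ℝ)-1)) := rfl
    rw [hgk, hgk2, div_eq_mul_inv, ← one_div]
    exact mul_le_mul_of_nonneg_left (term_bound' (k:ℝ) (n:ℝ) hx hxN) hfpos.le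
  have step2 : ∑ k ∈ Finset.Icc 2 (n-2),
        (n.factorial:ℝ) * (4/((n:ℝ)*((n:ℝ)-1)) * (g k + g (n-k)))
      = (n.factorial:ℝ) * (4/((n:ℝ)*((n:ℝ)-1)))
        * (∑ k ∈ Finset.Icc 2 (n-2), g k + ∑ k ∈ Finset.Icc 2 (n-2), g (n-k)) := by
    rw [← Finset.sum_add_distrib, Finset.mul_sum]
    apply Finset.sum_congr rfl
    intros; ring
  have hre : ∑ k ∈ Finset.Icc 2 (n-2), g (n-k) = ∑ k ∈ Finset.Icc 2 (n-2), g k :=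
    reindex' n hn g
  have hts : ∑ k ∈ Finset.Icc 2 (n-2), g k ≤ 1 := by
    rw [hg, tele_sum' (n-2) (by omega)]
    have : (0:ℝ) ≤ 1/((n-2:ℕ):ℝ) := by positivity
    linarith
  have hsum : ∑ k ∈ Finset.Icc 2 (n-2), g k + ∑ k ∈ Finset.Icc 2 (n-2), g (n-k) ≤ 2 := by
    rw [hre]; linarith
  have hfacR : ((n:ℕ).factorial : ℝ) = (n:ℝ) * ((n:ℝ)-1) * ((n-2).factorial : ℝ) := by
    rw [fac_id' n (by omega)]
    push_cast [Nat.cast_sub (show 1 ≤ n by omega), Nat.cast_sub (show 2 ≤ n by omega)]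
    ring
  have hc : (0:ℝ) ≤ (n.factorial:ℝ) * (4/((n:ℝ)*((n:ℝ)-1))) := by positivity
  calc ∑ k ∈ Finset.Icc 2 (n-2),
        (n.choose k : ℝ) * (k-2).factorial * (n-k-2).factorial
      ≤ (n.factorial:ℝ) * (4/((n:ℝ)*((n:ℝ)-1)))
        * (∑ k ∈ Finset.Icc 2 (n-2), g k + ∑ k ∈ Finset.Icc 2 (n-2), g (n-k)) := by
        rw [← step2]; exact step1
    _ ≤ (n.factorial:ℝ) * (4/((n:ℝ)*((n:ℝ)-1))) * 2 := by
        exact mul_le_mul_of_nonneg_left hsum hc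
    _ = 8 * ((n-2).factorial : ℝ) := by
        rw [hfacR]; field_simp [show (n:ℝ) - 1 ≠ 0 by linarith, show (n:ℝ) ≠ 0 by linarith]; ring
end

section
/- There exists a constant C > 0 such that for every integer m ≥ 6 one has Σ_{n=3}^{m−3} ( m! / (n!·(m−n)!) )·(n−3)!·(m−n−3)! ≤ C·(m−3)!. -/
open Finset

lemma sum_cube_inv_le (N : ℕ) : ∑ u ∈ Icc 1 N, (1:ℝ)/(u:ℝ)^3 ≤ 2 := by
  have key : ∀ N : ℕ, 1 ≤ N → ∑ u ∈ Icc 1 N, (1:ℝ)/(u:ℝ)^3 ≤ 2 - 1/(N:ℝ) := by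
    intro N hN
    induction N with
    | zero => omega
    | succ n ih =>
      rcases Nat.lt_or_ge n 1 with h | h
      · interval_cases n
        norm_num
      · rw [Finset.sum_Icc_succ_top (by omega)]
        have h1 : (1:ℝ) ≤ (n:ℝ) := by exact_mod_cast h
        have h2 : (0:ℝ) < (n:ℝ) := by linarith
        have h3 : (0:ℝ) < ((n:ℝ)+1) := by linarith
        have step : (1:ℝ)/((n:ℝ)+1)^3 ≤ 1/(n:ℝ) - 1/((n:ℝ)+1) := by
          rw [div_sub_div _ _ (ne_of_gt h2) (ne_of_gt h3)]
          rw [div_le_div_iff₀ (by positivity) (by positivity)]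
          ring_nf
          nlinarith
        have := ih h
        push_cast
        linarith
  rcases Nat.lt_or_ge N 1 with h | h
  · interval_cases N; simp
  · have := key N h
    have : (0:ℝ) ≤ 1/(N:ℝ) := by positivity
    linarith [key N h]

lemma nat_bound (k l : ℕ) :
    (k+l+6).choose (k+3) * k.factorial * l.factorial * ((k+1)^3 * (l+1)^3)
      ≤ 500 * (k+l+3).factorial * ((k+1)^3 + (l+1)^3) := by
  have hch : (k+l+6).choose (k+3) * (k+3).factorial * (l+3).factorial
      = (k+l+6).factorial := by
    have h := Nat.choose_mul_factorial_mul_factorial (show k+3 ≤ k+l+6 by omega)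
    simpa [show k+l+6 - (k+3) = l+3 by omega] using h
  have hkf : (k+3).factorial = (k+3)*((k+2)*((k+1)*k.factorial)) := by
    simp [Nat.factorial_succ]
  have hlf : (l+3).factorial = (l+3)*((l+2)*((l+1)*l.factorial)) := by
    simp [Nat.factorial_succ]
  have hmf : (k+l+6).factorial
      = (k+l+6)*((k+l+5)*((k+l+4)*(k+l+3).factorial)) := by
    have : k+l+6 = (k+l+3)+3 := by omega
    rw [this]; simp [Nat.factorial_succ]
  set T := (k+l+6).choose (k+3) * k.factorial * l.factorial with hT
  have hQ : T * ((k+3)*(k+2)*(k+1)*((l+3)*(l+2)*(l+1)))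
      = (k+l+6)*(k+l+5)*(k+l+4)*(k+l+3).factorial := by
    have := hch
    rw [hkf, hlf, hmf] at this
    calc T * ((k+3)*(k+2)*(k+1)*((l+3)*(l+2)*(l+1)))
        = (k+l+6).choose (k+3) * ((k+3)*((k+2)*((k+1)*k.factorial)))
            * ((l+3)*((l+2)*((l+1)*l.factorial))) := by rw [hT]; ring
      _ = (k+l+6)*((k+l+5)*((k+l+4)*(k+l+3).factorial)) := this
      _ = (k+l+6)*(k+l+5)*(k+l+4)*(k+l+3).factorial := by ring
  calc T * ((k+1)^3 * (l+1)^3)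
      ≤ T * ((k+3)*(k+2)*(k+1)*((l+3)*(l+2)*(l+1))) := by
        apply Nat.mul_le_mul_left
        have h1 : (k+1)^3 ≤ (k+3)*(k+2)*(k+1) := by nlinarith
        have h2 : (l+1)^3 ≤ (l+3)*(l+2)*(l+1) := by nlinarith
        exact Nat.mul_le_mul h1 h2
    _ = (k+l+6)*(k+l+5)*(k+l+4)*(k+l+3).factorial := hQ
    _ ≤ (k+l+6)^3 * (k+l+3).factorial := by
        apply Nat.mul_le_mul_right
        nlinarith
    _ ≤ (500 * ((k+1)^3 + (l+1)^3)) * (k+l+3).factorial := by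
        apply Nat.mul_le_mul_right
        have hr : ((k:ℝ)+(l:ℝ)+6)^3 ≤ 500 * (((k:ℝ)+1)^3 + ((l:ℝ)+1)^3) := by
          nlinarith [sq_nonneg ((k:ℝ)-(l:ℝ)), sq_nonneg ((k:ℝ)+(l:ℝ)),
            Nat.cast_nonneg (α := ℝ) k, Nat.cast_nonneg (α := ℝ) l,
            mul_nonneg (mul_nonneg (Nat.cast_nonneg (α := ℝ) k) (Nat.cast_nonneg (α := ℝ) l)) (Nat.cast_nonneg (α := ℝ) k),
            mul_nonneg (mul_nonneg (Nat.cast_nonneg (α := ℝ) k) (Nat.cast_nonneg (α := ℝ) l)) (Nat.cast_nonneg (α := ℝ) l),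
            mul_nonneg (Nat.cast_nonneg (α := ℝ) k) (Nat.cast_nonneg (α := ℝ) l)]
        exact_mod_cast hr
    _ = 500 * (k+l+3).factorial * ((k+1)^3 + (l+1)^3) := by ring

lemma term_bound (m n : ℕ) (h3 : 3 ≤ n) (hm : n + 3 ≤ m) :
    (m.choose n : ℝ) * (n - 3).factorial * (m - n - 3).factorial ≤
      500 * (m - 3).factorial *
        (1/(((n-2:ℕ)):ℝ)^3 + 1/(((m-n-2:ℕ)):ℝ)^3) := by
  obtain ⟨k, rfl⟩ : ∃ k, n = k + 3 := ⟨n-3, by omega⟩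
  obtain ⟨l, rfl⟩ : ∃ l, m = k + l + 6 := ⟨m - (k+3) - 3, by omega⟩
  have e1 : k + 3 - 3 = k := by omega
  have e2 : k + l + 6 - (k+3) - 3 = l := by omega
  have e3 : k + l + 6 - 3 = k + l + 3 := by omega
  have e4 : k + 3 - 2 = k + 1 := by omega
  have e5 : k + l + 6 - (k+3) - 2 = l + 1 := by omega
  rw [e1, e2, e3, e4, e5]
  have h := nat_bound k l
  have h' : ((k+l+6).choose (k+3) : ℝ) * k.factorial * l.factorial *
      (((k:ℝ)+1)^3 * ((l:ℝ)+1)^3)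
      ≤ 500 * (k+l+3).factorial * (((k:ℝ)+1)^3 + ((l:ℝ)+1)^3) := by
    exact_mod_cast h
  have hp : (0:ℝ) < ((k:ℝ)+1)^3 * ((l:ℝ)+1)^3 := by positivity
  rw [← le_div_iff₀ hp] at h'
  refine h'.trans_eq ?_
  push_cast
  field_simp
  ring

/-- There is a constant `C > 0` with
`Σ_{n=3}^{m-3} C(m,n) (n-3)! (m-n-3)! ≤ C (m-3)!` for all integers `m ≥ 6`. -/
theorem binomial_factorial_sum_estimate_two :
    ∃ C : ℝ, 0 < C ∧ ∀ m : ℕ, 6 ≤ m →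
      ∑ n ∈ Finset.Icc 3 (m - 3),
          (m.choose n : ℝ) * (n - 3).factorial * (m - n - 3).factorial ≤
        C * (m - 3).factorial := by
  refine ⟨2000, by norm_num, fun m hm => ?_⟩
  have hmap : Icc 3 (m-3) = Finset.map (addRightEmbedding 2) (Icc 1 (m-5)) := by
    rw [Finset.map_add_right_Icc]
    congr 1 <;> omega
  have sum1 : ∑ n ∈ Icc 3 (m-3), 1/(((n-2:ℕ)):ℝ)^3 ≤ 2 := by
    rw [hmap, Finset.sum_map]
    have : ∀ u ∈ Icc 1 (m-5), (1:ℝ)/(((addRightEmbedding 2 u - 2 : ℕ)):ℝ)^3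
        = 1/(u:ℝ)^3 := by
      intro u hu
      simp [addRightEmbedding]
    rw [Finset.sum_congr rfl this]
    exact sum_cube_inv_le (m-5)
  have sum2 : ∑ n ∈ Icc 3 (m-3), 1/(((m-n-2:ℕ)):ℝ)^3 ≤ 2 := by
    have heq : ∑ n ∈ Icc 3 (m-3), 1/(((m-n-2:ℕ)):ℝ)^3
        = ∑ n ∈ Icc 3 (m-3), 1/(((n-2:ℕ)):ℝ)^3 := by
      apply Finset.sum_nbij' (fun n => m - n) (fun n => m - n)
      · intro a ha
        simp only [mem_Icc] at ha ⊢
        omega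
      · intro a ha
        simp only [mem_Icc] at ha ⊢
        omega
      · intro a ha
        simp only [mem_Icc] at ha
        omega
      · intro a ha
        simp only [mem_Icc] at ha
        omega
      · intro a ha
        simp only [mem_Icc] at ha
        congr 2
    rw [heq]; exact sum1
  calc ∑ n ∈ Icc 3 (m-3),
        (m.choose n : ℝ) * (n - 3).factorial * (m - n - 3).factorial
      ≤ ∑ n ∈ Icc 3 (m-3), 500 * ((m-3).factorial : ℝ) *
          (1/(((n-2:ℕ)):ℝ)^3 + 1/(((m-n-2:ℕ)):ℝ)^3) := by
        apply Finset.sum_le_sum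
        intro n hn
        simp only [mem_Icc] at hn
        exact term_bound m n hn.1 (by omega)
    _ = 500 * ((m-3).factorial : ℝ) *
        ∑ n ∈ Icc 3 (m-3), (1/(((n-2:ℕ)):ℝ)^3 + 1/(((m-n-2:ℕ)):ℝ)^3) := by
        rw [Finset.mul_sum]
    _ ≤ 500 * ((m-3).factorial : ℝ) * 4 := by
        apply mul_le_mul_of_nonneg_left _ (by positivity)
        rw [Finset.sum_add_distrib]
        linarith
    _ = 2000 * (m-3).factorial := by ring
end

section
/- There exists a constant C > 0 such that for every integer m ≥ 5 one has Σ_{n=2}^{m−3} ( (m−1)! / (n!·(m−1−n)!) )·(n−2)!·(m−n−3)! ≤ C·(m−3)!. -/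
noncomputable def G : ℕ → ℝ := fun k => 8 / ((k : ℝ) * ((k : ℝ) - 1))

lemma sumG_eq (N : ℕ) :
    ∑ k ∈ Finset.Icc 2 (N + 1), G k = 8 - 8 / (N + 1) := by
  induction N with
  | zero => simp [Finset.Icc_eq_empty_of_lt]
  | succ N ih =>
    rw [Finset.sum_Icc_succ_top (by omega : 2 ≤ N + 1 + 1), ih]
    unfold G
    have h1 : ((N : ℝ) + 1) ≠ 0 := by positivity
    have h2 : ((N : ℝ) + 2) ≠ 0 := by positivity
    push_cast
    field_simp
    ring

lemma sumG_le (N : ℕ) : ∑ k ∈ Finset.Icc 2 N, G k ≤ 8 := by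
  rcases N with _ | N
  · simp
  · rw [sumG_eq]
    have : 0 ≤ 8 / ((N : ℝ) + 1) := by positivity
    linarith

set_option maxHeartbeats 800000 in
lemma key (a b : ℕ) :
    (((a + b + 4).choose (a + 2) : ℝ)) * (a.factorial) * (b.factorial) ≤
      (8 / (((a : ℝ) + 2) * ((a : ℝ) + 1)) + 8 / (((b : ℝ) + 2) * ((b : ℝ) + 1))) *
        ((a + b + 2).factorial) := by
  have hnat : (a + 2).choose ((a + 2)) = 1 := Nat.choose_self _
  have hid : ((a + b + 4).choose (a + 2)) * (a + 2).factorial * (b + 2).factorial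
      = (a + b + 4).factorial := by
    have := Nat.choose_mul_factorial_mul_factorial (show a + 2 ≤ a + b + 4 by omega)
    simpa [show a + b + 4 - (a + 2) = b + 2 by omega] using this
  have hidR : (((a + b + 4).choose (a + 2) : ℝ)) * ((a + 2).factorial) * ((b + 2).factorial)
      = ((a + b + 4).factorial : ℝ) := by exact_mod_cast hid
  have hfa : ((a + 2).factorial : ℝ) = ((a : ℝ) + 2) * ((a : ℝ) + 1) * (a.factorial : ℝ) := by
    rw [Nat.factorial_succ, Nat.factorial_succ]; push_cast; ring
  have hfb : ((b + 2).factorial : ℝ) = ((b : ℝ) + 2) * ((b : ℝ) + 1) * (b.factorial : ℝ) := by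
    rw [Nat.factorial_succ, Nat.factorial_succ]; push_cast; ring
  have hfab : ((a + b + 4).factorial : ℝ)
      = ((a : ℝ) + (b : ℝ) + 4) * ((a : ℝ) + (b : ℝ) + 3) * ((a + b + 2).factorial : ℝ) := by
    have : a + b + 4 = (a + b + 2) + 1 + 1 := by ring
    rw [this, Nat.factorial_succ, Nat.factorial_succ]; push_cast; ring
  set C : ℝ := ((a + b + 4).choose (a + 2) : ℝ) with hC
  set F : ℝ := ((a + b + 2).factorial : ℝ) with hF
  have hA : (0 : ℝ) < ((a : ℝ) + 2) * ((a : ℝ) + 1) := by positivity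
  have hB : (0 : ℝ) < ((b : ℝ) + 2) * ((b : ℝ) + 1) := by positivity
  have hFpos : (0 : ℝ) < F := by rw [hF]; exact_mod_cast Nat.factorial_pos _
  rw [div_add_div _ _ (ne_of_gt hA) (ne_of_gt hB), div_mul_eq_mul_div, le_div_iff₀ (by positivity)]
  have hmain : C * (a.factorial : ℝ) * (b.factorial : ℝ) *
      (((a : ℝ) + 2) * ((a : ℝ) + 1) * (((b : ℝ) + 2) * ((b : ℝ) + 1)))
      = ((a : ℝ) + (b : ℝ) + 4) * ((a : ℝ) + (b : ℝ) + 3) * F := by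
    rw [hfa, hfb] at hidR
    rw [hfab] at hidR
    linear_combination hidR
  rw [hmain, show (8 * (((b:ℝ) + 2) * ((b:ℝ) + 1)) + ((a:ℝ) + 2) * ((a:ℝ) + 1) * 8)
    = 8 * (((b:ℝ) + 2) * ((b:ℝ) + 1)) + 8 * (((a:ℝ) + 2) * ((a:ℝ) + 1)) from by ring]
  have hineq : ((a : ℝ) + (b : ℝ) + 4) * ((a : ℝ) + (b : ℝ) + 3)
      ≤ 8 * (((b : ℝ) + 2) * ((b : ℝ) + 1)) + 8 * (((a : ℝ) + 2) * ((a : ℝ) + 1)) := by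
    nlinarith [Nat.cast_nonneg (α := ℝ) a, Nat.cast_nonneg (α := ℝ) b,
      sq_nonneg ((a : ℝ) - (b : ℝ))]
  exact mul_le_mul_of_nonneg_right hineq (le_of_lt hFpos)

/-- There is a constant `C > 0` with
`Σ_{n=2}^{m-3} C(m-1,n) (n-2)! (m-n-3)! ≤ C (m-3)!` for all integers `m ≥ 5`. -/
theorem binomial_factorial_sum_estimate_three :
    ∃ C : ℝ, 0 < C ∧ ∀ m : ℕ, 5 ≤ m →
      ∑ n ∈ Finset.Icc 2 (m - 3),
          ((m - 1).choose n : ℝ) * (n - 2).factorial * (m - n - 3).factorial ≤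
        C * (m - 3).factorial := by
  refine ⟨16, by norm_num, fun m hm => ?_⟩
  have step1 : ∑ n ∈ Finset.Icc 2 (m - 3),
      ((m - 1).choose n : ℝ) * (n - 2).factorial * (m - n - 3).factorial ≤
      ∑ n ∈ Finset.Icc 2 (m - 3), (G n + G (m - 1 - n)) * ((m - 3).factorial : ℝ) := by
    apply Finset.sum_le_sum
    intro n hn
    rw [Finset.mem_Icc] at hn
    obtain ⟨a, rfl⟩ : ∃ a, n = a + 2 := ⟨n - 2, by omega⟩
    obtain ⟨b, rfl⟩ : ∃ b, m = (a + 2) + b + 3 := ⟨m - (a + 2) - 3, by omega⟩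
    have e1 : (a + 2) + b + 3 - 1 = a + b + 4 := by omega
    have e2 : (a + 2) + b + 3 - (a + 2) - 3 = b := by omega
    have e3 : (a + 2) + b + 3 - 3 = a + b + 2 := by omega
    have e4 : a + b + 4 - (a + 2) = b + 2 := by omega
    rw [e1, e2, e3, e4]
    have hG1 : G (a + 2) = 8 / (((a : ℝ) + 2) * ((a : ℝ) + 1)) := by
      unfold G; push_cast; ring_nf
    have hG2 : G (b + 2) = 8 / (((b : ℝ) + 2) * ((b : ℝ) + 1)) := by
      unfold G; push_cast; ring_nf
    rw [hG1, hG2, show a + 2 - 2 = a by omega]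
    exact key a b
  have step2 : ∑ n ∈ Finset.Icc 2 (m - 3), (G n + G (m - 1 - n)) * ((m - 3).factorial : ℝ)
      ≤ 16 * ((m - 3).factorial : ℝ) := by
    rw [← Finset.sum_mul]
    have hFpos : (0 : ℝ) ≤ ((m - 3).factorial : ℝ) := by positivity
    apply mul_le_mul_of_nonneg_right _ hFpos
    rw [Finset.sum_add_distrib]
    have hrefl : ∑ n ∈ Finset.Icc 2 (m - 3), G (m - 1 - n)
        = ∑ k ∈ Finset.Icc 2 (m - 3), G k := by
      refine Finset.sum_nbij' (fun n => m - 1 - n) (fun n => m - 1 - n)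
        ?_ ?_ ?_ ?_ ?_ <;> intro x hx <;> simp only [Finset.mem_Icc] at * <;>
        first | omega | rfl
    rw [hrefl]
    have := sumG_le (m - 3)
    linarith
  calc _ ≤ _ := step1
    _ ≤ _ := step2
end
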